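/- arXiv:2303.13877 — 3 statements merged into one kernel-verified Lean document; each statement's English description precedes it below -/
import Mathlib

section
/- Let G be a finite group and let Sym²(ℂ[G]) be the second symmetric power of the group algebra, with G × G acting via (g,h)·x = g x h⁻¹ diagonally on both factors, and ℤ₂ acting by inverting group elements. Then the ℤ₂-invariant part of the (G × G)-coinvariants of Sym²(ℂ[G]) is ℂ-linearly isomorphic to the ℤ₂-coinvariants of ℂ[Ĝ], where Ĝ is the set of conjugacy classes of G and ℤ₂ acts on Ĝ by [x] ↦ [x⁻¹]. -/
/- `Sym²(ℂ[G])` is modelled (in characteristic zero) as the space of symmetric functions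
`G × G → ℂ` (with `G` the basis of `ℂ[G]`).  `(g,h) ∈ G × G` acts on the basis by
`x ↦ g x h⁻¹`, the `ℤ₂`-involution inverts group elements.  The `(G × G)`-coinvariants are
the quotient by the submodule generated by all `f − (g,h)·f`; the involution descends to
this quotient, and we take the invariant part of the induced involution.  `ℂ[Ĝ]` is
modelled as the space of class functions `G → ℂ`, with `ℤ₂` acting by inversion, and its
`ℤ₂`-coinvariants are the quotient by the image of `id − involution`. -/

noncomputable section

variable (G : Type*) [Group G]

/-- `Sym²ℂ[G]`: symmetric functions on `G × G`. -/
def symTwo : Submodule ℂ (G × G → ℂ) :=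
  LinearMap.ker (LinearMap.funLeft ℂ ℂ (Prod.swap : G × G → G × G) - LinearMap.id)

variable {G}

/-- The action of `(g,h) ∈ G × G` on `Sym²ℂ[G]` (on the ambient space), induced by
`x ↦ g x h⁻¹` on the basis. -/
def actS (g h : G) : (G × G → ℂ) →ₗ[ℂ] (G × G → ℂ) :=
  LinearMap.funLeft ℂ ℂ (fun p : G × G => (g⁻¹ * p.1 * h, g⁻¹ * p.2 * h))

variable (G)

/-- The `ℤ₂`-involution on functions `G × G → ℂ`, inverting group elements. -/
def sigmaTwo : (G × G → ℂ) →ₗ[ℂ] (G × G → ℂ) :=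
  LinearMap.funLeft ℂ ℂ (fun p : G × G => (p.1⁻¹, p.2⁻¹))

/-- The submodule of relations defining the `(G × G)`-coinvariants of `Sym²ℂ[G]`. -/
def relN : Submodule ℂ (G × G → ℂ) :=
  Submodule.span ℂ {y | ∃ (g h : G) (f : G × G → ℂ), f ∈ symTwo G ∧ y = f - actS g h f}

/-- The relations, as a submodule of `Sym²ℂ[G]`. -/
def relNS : Submodule ℂ (symTwo G) := (relN G).comap (symTwo G).subtype

lemma sigmaTwo_mem_symTwo : ∀ f ∈ symTwo G, sigmaTwo G f ∈ symTwo G := by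
  intro f hf
  simp only [symTwo, LinearMap.mem_ker, LinearMap.sub_apply, LinearMap.id_apply,
    sub_eq_zero] at hf ⊢
  have h2 := fun p => congrFun hf p
  funext p
  simpa [sigmaTwo, LinearMap.funLeft_apply] using h2 (p.1⁻¹, p.2⁻¹)

/-- The involution restricted to `Sym²ℂ[G]`. -/
def sigmaS : symTwo G →ₗ[ℂ] symTwo G :=
  (sigmaTwo G).restrict (sigmaTwo_mem_symTwo G)

lemma relN_map_le : (relN G).map (sigmaTwo G) ≤ relN G := by
  rw [relN, Submodule.map_span, Submodule.span_le]
  rintro _ ⟨y, ⟨g, h, f, hf, rfl⟩, rfl⟩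
  refine Submodule.subset_span ⟨h, g, sigmaTwo G f, sigmaTwo_mem_symTwo G f hf, ?_⟩
  rw [map_sub]
  congr 1
  funext p
  simp [sigmaTwo, actS, LinearMap.funLeft_apply, mul_inv_rev, inv_inv, mul_assoc]

lemma relNS_le_comap : relNS G ≤ (relNS G).comap (sigmaS G) := by
  intro x hx
  have : sigmaTwo G (x : G × G → ℂ) ∈ relN G := relN_map_le G ⟨(x : G × G → ℂ), hx, rfl⟩
  simpa [relNS, Submodule.mem_comap, sigmaS, LinearMap.restrict_coe_apply] using this

/-- The induced involution on the `(G × G)`-coinvariants of `Sym²ℂ[G]`. -/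
def sigmaQ : (symTwo G ⧸ relNS G) →ₗ[ℂ] (symTwo G ⧸ relNS G) :=
  Submodule.mapQ (relNS G) (relNS G) (sigmaS G) (relNS_le_comap G)

/-- The space of class functions `G → ℂ`, a model of `ℂ[Ĝ]`. -/
def classFun : Submodule ℂ (G → ℂ) :=
  ⨅ h : G, LinearMap.ker
    (LinearMap.funLeft ℂ ℂ (fun g : G => h * g * h⁻¹) - LinearMap.id)

lemma mem_classFun {f : G → ℂ} :
    f ∈ classFun G ↔ ∀ h g : G, f (h * g * h⁻¹) = f g := by
  simp [classFun, Submodule.mem_iInf, LinearMap.mem_ker, sub_eq_zero, funext_iff]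

/-- The involution of the space of class functions induced by inversion on `G`. -/
def classFunInv : classFun G →ₗ[ℂ] classFun G :=
  (LinearMap.funLeft ℂ ℂ (fun g : G => g⁻¹)).restrict
    (p := classFun G) (q := classFun G)
    (fun f hf => by
      rw [mem_classFun] at hf ⊢
      intro h g
      have := hf h g⁻¹
      simpa [mul_inv_rev, mul_assoc] using this)

end

noncomputable section MyAux
set_option linter.unusedSectionVars false

open Finset

variable (G : Type*) [Group G] [Fintype G]

/-- `T f x = ∑_{a,h} f (a x a⁻¹ h, h)`. -/
def Tmap : (G × G → ℂ) →ₗ[ℂ] (G → ℂ) where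
  toFun f := fun x => ∑ a : G, ∑ h : G, f (a * x * a⁻¹ * h, h)
  map_add' f g := by funext x; simp [Finset.sum_add_distrib]
  map_smul' c f := by funext x; simp [Finset.mul_sum]

/-- `S φ (x,y) = φ(x y⁻¹) + φ(y x⁻¹)`. -/
def Smap : (G → ℂ) →ₗ[ℂ] (G × G → ℂ) where
  toFun φ := fun p => φ (p.1 * p.2⁻¹) + φ (p.2 * p.1⁻¹)
  map_add' f g := by funext p; simp; ring
  map_smul' c f := by funext p; simp; ring

/-- The averaging operator `P = ∑_{(g,k)} actS g k`. -/
def Pmap : (G × G → ℂ) →ₗ[ℂ] (G × G → ℂ) := ∑ p : G × G, actS p.1 p.2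

lemma Tmap_apply (f : G × G → ℂ) (x : G) :
    Tmap G f x = ∑ a : G, ∑ h : G, f (a * x * a⁻¹ * h, h) := rfl

lemma Smap_apply (φ : G → ℂ) (p : G × G) :
    Smap G φ p = φ (p.1 * p.2⁻¹) + φ (p.2 * p.1⁻¹) := rfl

lemma Pmap_apply (f : G × G → ℂ) (p : G × G) :
    Pmap G f p = ∑ g : G, ∑ k : G, f (g⁻¹ * p.1 * k, g⁻¹ * p.2 * k) := by
  simp only [Pmap, LinearMap.coe_sum, Finset.sum_apply, actS, LinearMap.funLeft_apply]
  rw [Fintype.sum_prod_type]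

lemma symm_of_mem {f : G × G → ℂ} (hf : f ∈ symTwo G) (u v : G) : f (u, v) = f (v, u) := by
  simp only [symTwo, LinearMap.mem_ker, LinearMap.sub_apply, LinearMap.id_apply,
    sub_eq_zero] at hf
  simpa [LinearMap.funLeft_apply] using (congrFun hf (u, v)).symm

lemma Tmap_mem_classFun (f : G × G → ℂ) : Tmap G f ∈ classFun G := by
  rw [mem_classFun]
  intro b x
  rw [Tmap_apply, Tmap_apply]
  refine Fintype.sum_equiv (Equiv.mulRight b) _ _ fun a => ?_
  refine Finset.sum_congr rfl fun h _ => ?_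
  simp only [Equiv.coe_mulRight]
  have : a * b * x * (a * b)⁻¹ * h = a * (b * x * b⁻¹) * a⁻¹ * h := by group
  rw [this]

lemma Tmap_actS (g k : G) (f : G × G → ℂ) : Tmap G (actS g k f) = Tmap G f := by
  funext x
  rw [Tmap_apply, Tmap_apply, ← Fintype.sum_prod_type', ← Fintype.sum_prod_type']
  refine Fintype.sum_equiv
    ((Equiv.mulLeft g⁻¹).prodCongr ((Equiv.mulLeft g⁻¹).trans (Equiv.mulRight k))) _ _
    fun p => ?_
  simp only [Equiv.prodCongr_apply, Equiv.coe_mulLeft, Equiv.coe_mulRight, Equiv.trans_apply,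
    Prod.map_fst, Prod.map_snd, actS, LinearMap.funLeft_apply]
  have h1 : g⁻¹ * p.1 * x * (g⁻¹ * p.1)⁻¹ * (g⁻¹ * p.2 * k)
      = g⁻¹ * (p.1 * x * p.1⁻¹ * p.2) * k := by group
  have h2 : (g⁻¹ * p.2 * k : G) = g⁻¹ * p.2 * k := rfl
  rw [h1]

lemma relN_le_ker_Tmap : relN G ≤ LinearMap.ker (Tmap G) := by
  rw [relN, Submodule.span_le]
  rintro _ ⟨g, h, f, hf, rfl⟩
  simp [LinearMap.mem_ker, map_sub, Tmap_actS]
lemma Tmap_Smap (φ : G → ℂ) (hφ : φ ∈ classFun G) (x : G) :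
    Tmap G (Smap G φ) x = (Fintype.card G : ℂ) ^ 2 * (φ x + φ x⁻¹) := by
  rw [mem_classFun] at hφ
  rw [Tmap_apply]
  have key : ∀ a h : G, Smap G φ (a * x * a⁻¹ * h, h) = φ x + φ x⁻¹ := by
    intro a h
    rw [Smap_apply]
    have e1 : (a * x * a⁻¹ * h) * h⁻¹ = a * x * a⁻¹ := by group
    have e2 : h * (a * x * a⁻¹ * h)⁻¹ = a * x⁻¹ * a⁻¹ := by group
    rw [e1, e2, hφ a x, hφ a x⁻¹]
  simp only [key, Finset.sum_const, Finset.card_univ, nsmul_eq_mul]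
  ring

lemma Smap_inv (φ : G → ℂ) :
    Smap G (LinearMap.funLeft ℂ ℂ (fun g : G => g⁻¹) φ) = Smap G φ := by
  funext p
  rw [Smap_apply, Smap_apply]
  simp only [LinearMap.funLeft_apply, mul_inv_rev, inv_inv]
  exact add_comm _ _

lemma Smap_mem_symTwo (φ : G → ℂ) : Smap G φ ∈ symTwo G := by
  simp only [symTwo, LinearMap.mem_ker, LinearMap.sub_apply, LinearMap.id_apply, sub_eq_zero]
  funext p
  simp only [LinearMap.funLeft_apply, Prod.fst_swap, Prod.snd_swap, Smap_apply]
  exact add_comm _ _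

lemma sigmaTwo_Smap (φ : G → ℂ) (hφ : φ ∈ classFun G) :
    sigmaTwo G (Smap G φ) = Smap G φ := by
  rw [mem_classFun] at hφ
  funext p
  simp only [sigmaTwo, LinearMap.funLeft_apply, Smap_apply, inv_inv]
  have e1 : φ (p.1⁻¹ * p.2) = φ (p.2 * p.1⁻¹) := by
    have := hφ p.1⁻¹ (p.2 * p.1⁻¹)
    rw [← this]; congr 1; group
  have e2 : φ (p.2⁻¹ * p.1) = φ (p.1 * p.2⁻¹) := by
    have := hφ p.2⁻¹ (p.1 * p.2⁻¹)
    rw [← this]; congr 1; group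
  rw [e1, e2]
  exact add_comm _ _

/-- Reindexing equivalence used in `Smap_Tmap`. -/
def eAux (y : G) : G × G ≃ G × G where
  toFun p := (p.1⁻¹, y⁻¹ * p.1⁻¹ * p.2)
  invFun q := (q.1⁻¹, q.1⁻¹ * y * q.2)
  left_inv p := by
    refine Prod.ext (by simp) ?_
    simp only [inv_inv]
    group
  right_inv q := by
    refine Prod.ext (by simp) ?_
    simp only [inv_inv]
    group

lemma Smap_Tmap (f : G × G → ℂ) (hf : f ∈ symTwo G) :
    Smap G (Tmap G f) = (2 : ℂ) • Pmap G f := by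
  have key : ∀ x y : G, (∑ g : G, ∑ k : G, f (g⁻¹ * x * k, g⁻¹ * y * k))
      = ∑ a : G, ∑ h : G, f (a * (x * y⁻¹) * a⁻¹ * h, h) := by
    intro x y
    rw [← Fintype.sum_prod_type', ← Fintype.sum_prod_type']
    refine (Fintype.sum_equiv (eAux G y) _ _ fun p => ?_).symm
    simp only [eAux, Equiv.coe_fn_mk]
    have h1 : (p.1⁻¹)⁻¹ * x * (y⁻¹ * p.1⁻¹ * p.2) = p.1 * (x * y⁻¹) * p.1⁻¹ * p.2 := by group
    have h2 : (p.1⁻¹)⁻¹ * y * (y⁻¹ * p.1⁻¹ * p.2) = p.2 := by group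
    rw [h1, h2]
  funext p
  obtain ⟨x, y⟩ := p
  rw [Pi.smul_apply, Pmap_apply, Smap_apply, Tmap_apply, Tmap_apply]
  simp only
  rw [← key x y, ← key y x]
  have hswap : (∑ g : G, ∑ k : G, f (g⁻¹ * y * k, g⁻¹ * x * k))
      = ∑ g : G, ∑ k : G, f (g⁻¹ * x * k, g⁻¹ * y * k) :=
    Finset.sum_congr rfl fun g _ => Finset.sum_congr rfl fun k _ => symm_of_mem G hf _ _
  rw [hswap, smul_eq_mul]
  ring

lemma card_smul_sub_Pmap_mem (f : G × G → ℂ) (hf : f ∈ symTwo G) :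
    ((Fintype.card G : ℂ) ^ 2) • f - Pmap G f ∈ relN G := by
  have hrw : ((Fintype.card G : ℂ) ^ 2) • f - Pmap G f
      = ∑ p : G × G, (f - actS p.1 p.2 f) := by
    rw [Finset.sum_sub_distrib, Finset.sum_const, Finset.card_univ, Fintype.card_prod]
    have h1 : (Fintype.card G * Fintype.card G) • f = ((Fintype.card G : ℂ) ^ 2) • f := by
      rw [← Nat.cast_smul_eq_nsmul ℂ]
      norm_num [sq]
    rw [h1]
    congr 1
    ext q
    simp [Pmap, LinearMap.coe_sum, Finset.sum_apply]
  rw [hrw]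
  exact Submodule.sum_mem _ fun p _ => Submodule.subset_span ⟨p.1, p.2, f, hf, rfl⟩
def dconst : ℂ := (Fintype.card G : ℂ) ^ 2

lemma dconst_ne : dconst G ≠ 0 := pow_ne_zero _ (Nat.cast_ne_zero.mpr Fintype.card_ne_zero)

def cconst : ℂ := ((2 : ℂ) * dconst G)⁻¹

def T1 : symTwo G →ₗ[ℂ] classFun G :=
  LinearMap.codRestrict (classFun G) ((Tmap G).comp (symTwo G).subtype)
    fun f => Tmap_mem_classFun G f

def qCmap : classFun G →ₗ[ℂ] (classFun G ⧸ LinearMap.range (LinearMap.id - classFunInv G)) :=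
  (LinearMap.range (LinearMap.id - classFunInv G)).mkQ

lemma hker1 : relNS G ≤ LinearMap.ker ((qCmap G).comp (T1 G)) := by
  intro x hx
  have hx' : (x : G × G → ℂ) ∈ relN G := hx
  have hT : Tmap G (x : G × G → ℂ) = 0 := relN_le_ker_Tmap G hx'
  have h0 : T1 G x = 0 := Subtype.ext hT
  simp [LinearMap.mem_ker, h0]

def Phi0 : (symTwo G ⧸ relNS G) →ₗ[ℂ]
    (classFun G ⧸ LinearMap.range (LinearMap.id - classFunInv G)) :=
  Submodule.liftQ (relNS G) ((qCmap G).comp (T1 G)) (hker1 G)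

def Phi : (LinearMap.ker (sigmaQ G - LinearMap.id) : Submodule ℂ (symTwo G ⧸ relNS G)) →ₗ[ℂ]
    (classFun G ⧸ LinearMap.range (LinearMap.id - classFunInv G)) :=
  (Phi0 G).comp (LinearMap.ker (sigmaQ G - LinearMap.id)).subtype

def S1 : classFun G →ₗ[ℂ] symTwo G :=
  LinearMap.codRestrict (symTwo G) ((Smap G).comp (classFun G).subtype)
    fun φ => Smap_mem_symTwo G φ

lemma hS1fix (φ : classFun G) : sigmaS G (S1 G φ) = S1 G φ := by
  apply Subtype.ext
  exact sigmaTwo_Smap G (φ : G → ℂ) φ.2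

lemma hmem (φ : classFun G) :
    cconst G • Submodule.Quotient.mk (S1 G φ)
      ∈ LinearMap.ker (sigmaQ G - LinearMap.id) := by
  have hfix : sigmaQ G (Submodule.Quotient.mk (S1 G φ)) = Submodule.Quotient.mk (S1 G φ) := by
    rw [sigmaQ, Submodule.mapQ_apply, hS1fix]
  simp [LinearMap.mem_ker, LinearMap.sub_apply, map_smul, hfix]

def Psi1 : classFun G →ₗ[ℂ]
    (LinearMap.ker (sigmaQ G - LinearMap.id) : Submodule ℂ (symTwo G ⧸ relNS G)) :=
  LinearMap.codRestrict _ (cconst G • ((relNS G).mkQ.comp (S1 G))) fun φ => hmem G φ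

lemma hker2 : LinearMap.range (LinearMap.id - classFunInv G) ≤ LinearMap.ker (Psi1 G) := by
  rintro _ ⟨φ, rfl⟩
  have hval : S1 G ((LinearMap.id - classFunInv G : classFun G →ₗ[ℂ] classFun G) φ) = 0 := by
    apply Subtype.ext
    have h1 : (((LinearMap.id - classFunInv G : classFun G →ₗ[ℂ] classFun G) φ : classFun G) : G → ℂ)
        = (φ : G → ℂ) - LinearMap.funLeft ℂ ℂ (fun g : G => g⁻¹) (φ : G → ℂ) := rfl
    show Smap G (((LinearMap.id - classFunInv G : classFun G →ₗ[ℂ] classFun G) φ : classFun G) : G → ℂ)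
        = (0 : G × G → ℂ)
    rw [h1, map_sub, Smap_inv, sub_self]
  rw [LinearMap.mem_ker]
  apply Subtype.ext
  show cconst G • (relNS G).mkQ (S1 G _) = 0
  rw [hval, map_zero, smul_zero]

def Psi : (classFun G ⧸ LinearMap.range (LinearMap.id - classFunInv G)) →ₗ[ℂ]
    (LinearMap.ker (sigmaQ G - LinearMap.id) : Submodule ℂ (symTwo G ⧸ relNS G)) :=
  Submodule.liftQ _ (Psi1 G) (hker2 G)

lemma main_aux : Nonempty
    ((LinearMap.ker (sigmaQ G - LinearMap.id) : Submodule ℂ (symTwo G ⧸ relNS G)) ≃ₗ[ℂ]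
      (classFun G ⧸ LinearMap.range (LinearMap.id - classFunInv G))) := by
  refine ⟨LinearEquiv.ofLinear (Phi G) (Psi G) ?_ ?_⟩
  · -- Φ ∘ Ψ = id
    apply LinearMap.ext
    intro x
    obtain ⟨φ, rfl⟩ := Submodule.mkQ_surjective _ x
    have hT1S1 : T1 G (S1 G φ) = dconst G • (φ + classFunInv G φ) := by
      apply Subtype.ext
      funext x
      show Tmap G (Smap G (φ : G → ℂ)) x = _
      rw [Tmap_Smap G (φ : G → ℂ) φ.2 x]
      rfl
    have hqC : qCmap G (classFunInv G φ) = qCmap G φ := by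
      rw [qCmap, Submodule.mkQ_apply, Submodule.mkQ_apply, Submodule.Quotient.eq]
      refine ⟨-φ, ?_⟩
      simp only [map_neg, LinearMap.sub_apply, LinearMap.id_apply]
      abel
    have e1 : ((Phi G).comp (Psi G)) ((LinearMap.range (LinearMap.id - classFunInv G)).mkQ φ)
        = cconst G • qCmap G (T1 G (S1 G φ)) := by
      rw [LinearMap.comp_apply]
      show Phi0 G ((Psi1 G φ : symTwo G ⧸ relNS G)) = _
      show Phi0 G (cconst G • (relNS G).mkQ (S1 G φ)) = _
      rw [map_smul]
      rfl
    rw [e1, hT1S1, map_smul, map_add, hqC, ← two_smul ℂ (qCmap G φ), smul_smul, smul_smul]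
    have hone : cconst G * dconst G * 2 = 1 := by
      rw [cconst]
      field_simp
      exact div_self (dconst_ne G)
    rw [LinearMap.id_apply, hone, one_smul]
    rfl
  · -- Ψ ∘ Φ = id
    apply LinearMap.ext
    intro x
    obtain ⟨f, hf⟩ := Submodule.mkQ_surjective (relNS G) (x : symTwo G ⧸ relNS G)
    apply Subtype.ext
    rw [LinearMap.id_apply]
    have e1 : ((((Psi G).comp (Phi G)) x : _) : symTwo G ⧸ relNS G)
        = cconst G • Submodule.Quotient.mk (S1 G (T1 G f)) := by
      have h2 : Phi G x = qCmap G (T1 G f) := by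
        show Phi0 G (x : symTwo G ⧸ relNS G) = _
        rw [← hf]
        rfl
      rw [LinearMap.comp_apply, h2]
      rfl
    rw [e1, ← hf, ← Submodule.Quotient.mk_smul, Submodule.mkQ_apply, Submodule.Quotient.eq]
    show ((cconst G • S1 G (T1 G f) - f : symTwo G) : G × G → ℂ) ∈ relN G
    have hval : ((cconst G • S1 G (T1 G f) - f : symTwo G) : G × G → ℂ)
        = cconst G • ((2 : ℂ) • Pmap G (f : G × G → ℂ)) - (f : G × G → ℂ) := by
      have h3 : (S1 G (T1 G f) : G × G → ℂ) = (2 : ℂ) • Pmap G (f : G × G → ℂ) :=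
        Smap_Tmap G (f : G × G → ℂ) f.2
      simp [h3]
    have hc2 : cconst G * 2 = (dconst G)⁻¹ := by
      rw [cconst]
      field_simp
    have harith : cconst G • ((2 : ℂ) • Pmap G (f : G × G → ℂ)) - (f : G × G → ℂ)
        = (-((dconst G)⁻¹)) • (dconst G • (f : G × G → ℂ) - Pmap G (f : G × G → ℂ)) := by
      rw [smul_smul, hc2, smul_sub, smul_smul, neg_mul, inv_mul_cancel₀ (dconst_ne G)]
      simp only [neg_smul, one_smul, sub_neg_eq_add]
      abel
    rw [hval, harith]
    exact Submodule.smul_mem _ _ (card_smul_sub_Pmap_mem G (f : G × G → ℂ) f.2)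

end MyAux

/-- For a finite group `G`, the `ℤ₂`-invariant part of the `(G × G)`-coinvariants of
`Sym²(ℂ[G])` is `ℂ`-linearly isomorphic to the `ℤ₂`-coinvariants of `ℂ[Ĝ]`, where `Ĝ` is
the set of conjugacy classes of `G` (modelled by class functions) and `ℤ₂` acts by
inversion. -/
theorem sym2_coinvariants_iso_conj (G : Type*) [Group G] [Finite G] :
    Nonempty
      ((LinearMap.ker (sigmaQ G - LinearMap.id) : Submodule ℂ (symTwo G ⧸ relNS G)) ≃ₗ[ℂ]
        (classFun G ⧸ LinearMap.range (LinearMap.id - classFunInv G))) := by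
  letI : Fintype G := Fintype.ofFinite G
  exact main_aux G
end

section
/- For the cyclic group π = ℤ/n (n ≥ 1), the ℂ-linear map W^even on Λ³ℂ[π] defined by W^even(tᵃ ∧ tᵇ ∧ tᶜ) = t^{b−a} ∧ t^{c−b} ∧ t^{a−c} + t^{a−b} ∧ t^{b−c} ∧ t^{c−a} is well-defined, alternating, invariant under the diagonal action (left and right multiplication) of π × π on ℂ[π], and invariant under the involution sending each group element to its inverse. -/
open ExteriorAlgebra

/- We model the group algebra `ℂ[π]` of `π = ℤ/n` as the functions `ZMod n → ℂ`, with basis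
`e a = Pi.single a 1` (corresponding to `tᵃ`).  `Λ³ℂ[π]` is the graded piece `⋀[ℂ]^3` of the
exterior algebra, generated by the wedges `ιMulti ![e a, e b, e c] = tᵃ ∧ tᵇ ∧ tᶜ`.  The
`π × π`-action on the basis is `tᵃ ↦ t^{a+g-h}`, extended diagonally to `Λ³`; the involution
negates exponents.  The content of the statement is that the formula for `W^even` on wedges
of basis vectors induces a well-defined (hence alternating) linear map on `Λ³ℂ[π]`, which is
invariant under the `π × π`-action and under the involution. -/

/-- The basis vector `tᵃ` of `ℂ[π]`, `π = ℤ/n`. -/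
noncomputable def bas (n : ℕ) (a : ZMod n) : ZMod n → ℂ := Pi.single a 1

namespace WevenAux

set_option linter.unusedSectionVars false

variable (n : ℕ) [NeZero n]

noncomputable def w (a b c : ZMod n) : ExteriorAlgebra ℂ (ZMod n → ℂ) :=
  ιMulti ℂ 3 ![bas n (b - a), bas n (c - b), bas n (a - c)]
    + ιMulti ℂ 3 ![bas n (a - b), bas n (b - c), bas n (c - a)]

lemma w_mem (a b c : ZMod n) : w n a b c ∈ ⋀[ℂ]^3 (ZMod n → ℂ) :=
  Submodule.add_mem _ (ιMulti_range ℂ 3 (Set.mem_range_self _))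
    (ιMulti_range ℂ 3 (Set.mem_range_self _))

lemma vec_swap01 (u v z : ZMod n → ℂ) :
    ![u, v, z] ∘ ⇑(Equiv.swap (0 : Fin 3) 1) = ![v, u, z] := by
  funext i; fin_cases i <;> simp [Equiv.swap_apply_def]

lemma vec_swap02 (u v z : ZMod n → ℂ) :
    ![u, v, z] ∘ ⇑(Equiv.swap (0 : Fin 3) 2) = ![z, v, u] := by
  funext i; fin_cases i <;> simp [Equiv.swap_apply_def]

lemma vec_swap12 (u v z : ZMod n → ℂ) :
    ![u, v, z] ∘ ⇑(Equiv.swap (1 : Fin 3) 2) = ![u, z, v] := by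
  funext i; fin_cases i <;> simp [Equiv.swap_apply_def]

lemma iMulti_swap01 (u v z : ZMod n → ℂ) :
    ιMulti ℂ 3 ![v, u, z] = - ιMulti ℂ 3 ![u, v, z] := by
  rw [← vec_swap01 n u v z]
  exact (ιMulti ℂ 3).map_swap ![u, v, z] (by decide : (0 : Fin 3) ≠ 1)

lemma iMulti_swap02 (u v z : ZMod n → ℂ) :
    ιMulti ℂ 3 ![z, v, u] = - ιMulti ℂ 3 ![u, v, z] := by
  rw [← vec_swap02 n u v z]
  exact (ιMulti ℂ 3).map_swap ![u, v, z] (by decide : (0 : Fin 3) ≠ 2)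

lemma iMulti_swap12 (u v z : ZMod n → ℂ) :
    ιMulti ℂ 3 ![u, z, v] = - ιMulti ℂ 3 ![u, v, z] := by
  rw [← vec_swap12 n u v z]
  exact (ιMulti ℂ 3).map_swap ![u, v, z] (by decide : (1 : Fin 3) ≠ 2)

lemma w_swap01 (a b c : ZMod n) : w n b a c = - w n a b c := by
  show ιMulti ℂ 3 ![bas n (a - b), bas n (c - a), bas n (b - c)]
      + ιMulti ℂ 3 ![bas n (b - a), bas n (a - c), bas n (c - b)] = _
  rw [iMulti_swap12 n (bas n (a - b)) (bas n (b - c)) (bas n (c - a)),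
      iMulti_swap12 n (bas n (b - a)) (bas n (c - b)) (bas n (a - c))]
  unfold w; abel

lemma w_swap12 (a b c : ZMod n) : w n a c b = - w n a b c := by
  show ιMulti ℂ 3 ![bas n (c - a), bas n (b - c), bas n (a - b)]
      + ιMulti ℂ 3 ![bas n (a - c), bas n (c - b), bas n (b - a)] = _
  rw [iMulti_swap02 n (bas n (a - b)) (bas n (b - c)) (bas n (c - a)),
      iMulti_swap02 n (bas n (b - a)) (bas n (c - b)) (bas n (a - c))]
  unfold w; abel

lemma w_swap02 (a b c : ZMod n) : w n c b a = - w n a b c := by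
  show ιMulti ℂ 3 ![bas n (b - c), bas n (a - b), bas n (c - a)]
      + ιMulti ℂ 3 ![bas n (c - b), bas n (b - a), bas n (a - c)] = _
  rw [iMulti_swap01 n (bas n (a - b)) (bas n (b - c)) (bas n (c - a)),
      iMulti_swap01 n (bas n (b - a)) (bas n (c - b)) (bas n (a - c))]
  unfold w; abel

noncomputable def w' (a b c : ZMod n) : ⋀[ℂ]^3 (ZMod n → ℂ) := ⟨w n a b c, w_mem n a b c⟩

lemma w'_swap01 (a b c : ZMod n) : w' n b a c = - w' n a b c :=
  Subtype.ext (by simp only [Submodule.coe_neg]; exact w_swap01 n a b c)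

lemma w'_swap12 (a b c : ZMod n) : w' n a c b = - w' n a b c :=
  Subtype.ext (by simp only [Submodule.coe_neg]; exact w_swap12 n a b c)

lemma w'_swap02 (a b c : ZMod n) : w' n c b a = - w' n a b c :=
  Subtype.ext (by simp only [Submodule.coe_neg]; exact w_swap02 n a b c)

lemma pair_cancel {α : Type*} [Fintype α] {E : Type*} [AddCommGroup E] [Module ℂ E]
    (x : α → ℂ) (W : α → α → E) (hW : ∀ a b, W b a = - W a b) :
    ∑ a, x a • ∑ b, x b • W a b = 0 := by
  have h : (∑ a, x a • ∑ b, x b • W a b) = - ∑ a, x a • ∑ b, x b • W a b := by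
    calc ∑ a, x a • ∑ b, x b • W a b
        = ∑ a, ∑ b, x a • x b • W a b := by simp [Finset.smul_sum]
      _ = ∑ b, ∑ a, x a • x b • W a b := Finset.sum_comm
      _ = ∑ a, ∑ b, x b • x a • W b a := rfl
      _ = ∑ a, ∑ b, x a • x b • (- W a b) := by
            refine Finset.sum_congr rfl fun a _ => Finset.sum_congr rfl fun b _ => ?_
            rw [hW a b, smul_comm (x b) (x a)]
      _ = - ∑ a, ∑ b, x a • x b • W a b := by
            simp [smul_neg, ← Finset.sum_neg_distrib]
      _ = - ∑ a, x a • ∑ b, x b • W a b := by simp [Finset.smul_sum]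
  have h2 : (2 : ℂ) • (∑ a, x a • ∑ b, x b • W a b) = 0 := by
    rw [two_smul]; nth_rewrite 2 [h]; simp
  have := (smul_eq_zero (r := (2:ℂ)) (m := ∑ a, x a • ∑ b, x b • W a b)).1 h2
  simpa using this

lemma smul_sum_swap {α : Type*} [Fintype α] {E : Type*} [AddCommGroup E] [Module ℂ E]
    (y z : α → ℂ) (T : α → α → E) :
    ∑ b, y b • ∑ c, z c • T b c = ∑ c, z c • ∑ b, y b • T b c := by
  calc ∑ b, y b • ∑ c, z c • T b c
      = ∑ b, ∑ c, y b • z c • T b c := by simp [Finset.smul_sum]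
    _ = ∑ c, ∑ b, y b • z c • T b c := Finset.sum_comm
    _ = ∑ c, ∑ b, z c • y b • T b c :=
        Finset.sum_congr rfl fun c _ => Finset.sum_congr rfl fun b _ => smul_comm _ _ _
    _ = ∑ c, z c • ∑ b, y b • T b c := by simp [Finset.smul_sum]

lemma cancel01 (x z : ZMod n → ℂ) :
    ∑ a : ZMod n, x a • ∑ b : ZMod n, x b • ∑ c : ZMod n, z c • w' n a b c = 0 :=
  pair_cancel x (fun a b => ∑ c, z c • w' n a b c)
    (fun a b => by simp only [w'_swap01 n a b, smul_neg, Finset.sum_neg_distrib])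

lemma cancel12 (z x : ZMod n → ℂ) :
    ∑ a : ZMod n, z a • ∑ b : ZMod n, x b • ∑ c : ZMod n, x c • w' n a b c = 0 := by
  refine Finset.sum_eq_zero fun a _ => ?_
  rw [pair_cancel x (fun b c => w' n a b c)
    (fun b c => by simpa using w'_swap12 n a b c), smul_zero]

lemma cancel02 (x z : ZMod n → ℂ) :
    ∑ a : ZMod n, x a • ∑ b : ZMod n, z b • ∑ c : ZMod n, x c • w' n a b c = 0 := by
  have : ∀ a : ZMod n, (∑ b : ZMod n, z b • ∑ c : ZMod n, x c • w' n a b c)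
      = ∑ c : ZMod n, x c • ∑ b : ZMod n, z b • w' n a b c :=
    fun a => smul_sum_swap z x (fun b c => w' n a b c)
  simp only [this]
  exact pair_cancel x (fun a c => ∑ b, z b • w' n a b c)
    (fun a c => by simp only [w'_swap02 n a _ c, smul_neg, Finset.sum_neg_distrib])

set_option maxHeartbeats 1000000 in
noncomputable def Falt : (ZMod n → ℂ) [⋀^Fin 3]→ₗ[ℂ] (⋀[ℂ]^3 (ZMod n → ℂ)) where
  toFun v := ∑ a : ZMod n, v 0 a • ∑ b : ZMod n, v 1 b • ∑ c : ZMod n, v 2 c • w' n a b c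
  map_update_add' m i x y := by
    rename_i instD
    obtain rfl : instD = instDecidableEqFin 3 := Subsingleton.elim _ _
    fin_cases i <;>
      simp [Function.update_of_ne, Pi.add_apply, add_smul, smul_add,
        Finset.sum_add_distrib]
  map_update_smul' m i r x := by
    rename_i instD
    obtain rfl : instD = instDecidableEqFin 3 := Subsingleton.elim _ _
    fin_cases i <;>
      simp [Function.update_of_ne, Pi.smul_apply, smul_eq_mul, mul_smul, Finset.smul_sum] <;>
    · refine Finset.sum_congr rfl fun a _ => Finset.sum_congr rfl fun b _ =>
        Finset.sum_congr rfl fun c _ => ?_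
      simp only [smul_smul]
      congr 1
      ring
  map_eq_zero_of_eq' v i j h hij := by
    fin_cases i <;> fin_cases j
    · exact absurd rfl hij
    · have h' : v 0 = v 1 := h
      show ∑ a : ZMod n, v 0 a • ∑ b : ZMod n, v 1 b • ∑ c : ZMod n, v 2 c • w' n a b c = 0
      rw [h']; exact cancel01 n (v 1) (v 2)
    · have h' : v 0 = v 2 := h
      show ∑ a : ZMod n, v 0 a • ∑ b : ZMod n, v 1 b • ∑ c : ZMod n, v 2 c • w' n a b c = 0
      rw [h']; exact cancel02 n (v 2) (v 1)
    · have h' : v 1 = v 0 := h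
      show ∑ a : ZMod n, v 0 a • ∑ b : ZMod n, v 1 b • ∑ c : ZMod n, v 2 c • w' n a b c = 0
      rw [h']; exact cancel01 n (v 0) (v 2)
    · exact absurd rfl hij
    · have h' : v 1 = v 2 := h
      show ∑ a : ZMod n, v 0 a • ∑ b : ZMod n, v 1 b • ∑ c : ZMod n, v 2 c • w' n a b c = 0
      rw [h']; exact cancel12 n (v 0) (v 2)
    · have h' : v 2 = v 0 := h
      show ∑ a : ZMod n, v 0 a • ∑ b : ZMod n, v 1 b • ∑ c : ZMod n, v 2 c • w' n a b c = 0
      rw [h']; exact cancel02 n (v 0) (v 1)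
    · have h' : v 2 = v 1 := h
      show ∑ a : ZMod n, v 0 a • ∑ b : ZMod n, v 1 b • ∑ c : ZMod n, v 2 c • w' n a b c = 0
      rw [h']; exact cancel12 n (v 0) (v 1)
    · exact absurd rfl hij

lemma Falt_apply (v : Fin 3 → (ZMod n → ℂ)) :
    Falt n v = ∑ a : ZMod n, v 0 a • ∑ b : ZMod n, v 1 b • ∑ c : ZMod n, v 2 c • w' n a b c :=
  rfl

noncomputable def L : ExteriorAlgebra ℂ (ZMod n → ℂ) →ₗ[ℂ] ⋀[ℂ]^3 (ZMod n → ℂ) :=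
  liftAlternating (Pi.single 3 (Falt n))

lemma L_ιMulti (v : Fin 3 → (ZMod n → ℂ)) : L n (ιMulti ℂ 3 v) = Falt n v := by
  rw [L, liftAlternating_apply_ιMulti, Pi.single_eq_same]

lemma single_sum {E : Type*} [AddCommGroup E] [Module ℂ E] (a : ZMod n) (f : ZMod n → E) :
    ∑ x : ZMod n, bas n a x • f x = f a := by
  simp [bas, Pi.single_apply, ite_smul]

lemma Falt_bas (a b c : ZMod n) : Falt n ![bas n a, bas n b, bas n c] = w' n a b c := by
  rw [Falt_apply]
  simp only [Matrix.cons_val_zero, Matrix.cons_val_one, Matrix.head_cons, Matrix.cons_val_two,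
    Matrix.tail_cons]
  rw [single_sum n a fun x => ∑ y : ZMod n, bas n b y • ∑ z : ZMod n, bas n c z • w' n x y z,
    single_sum n b fun y => ∑ z : ZMod n, bas n c z • w' n a y z,
    single_sum n c fun z => w' n a b z]

lemma Falt_comp (f : ZMod n ≃ ZMod n)
    (hw : ∀ a b c : ZMod n, w' n (f a) (f b) (f c) = w' n a b c)
    (v : Fin 3 → (ZMod n → ℂ)) :
    Falt n (fun i => v i ∘ ⇑f) = Falt n v := by
  rw [Falt_apply, Falt_apply]
  symm
  calc ∑ a : ZMod n, v 0 a • ∑ b : ZMod n, v 1 b • ∑ c : ZMod n, v 2 c • w' n a b c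
      = ∑ a : ZMod n, v 0 (f a) • ∑ b : ZMod n, v 1 b • ∑ c : ZMod n, v 2 c • w' n (f a) b c :=
        (Equiv.sum_comp f fun a => v 0 a • ∑ b : ZMod n, v 1 b •
          ∑ c : ZMod n, v 2 c • w' n a b c).symm
    _ = ∑ a : ZMod n, v 0 (f a) • ∑ b : ZMod n, v 1 (f b) •
          ∑ c : ZMod n, v 2 c • w' n (f a) (f b) c := by
        refine Finset.sum_congr rfl fun a _ => ?_
        congr 1
        exact (Equiv.sum_comp f fun b => v 1 b • ∑ c : ZMod n, v 2 c • w' n (f a) b c).symm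
    _ = ∑ a : ZMod n, v 0 (f a) • ∑ b : ZMod n, v 1 (f b) •
          ∑ c : ZMod n, v 2 (f c) • w' n (f a) (f b) (f c) := by
        refine Finset.sum_congr rfl fun a _ => ?_
        congr 1
        refine Finset.sum_congr rfl fun b _ => ?_
        congr 1
        exact (Equiv.sum_comp f fun c => v 2 c • w' n (f a) (f b) c).symm
    _ = ∑ a : ZMod n, v 0 (f a) • ∑ b : ZMod n, v 1 (f b) •
          ∑ c : ZMod n, v 2 (f c) • w' n a b c := by
        simp_rw [hw]
    _ = ∑ a : ZMod n, (v 0 ∘ ⇑f) a • ∑ b : ZMod n, (v 1 ∘ ⇑f) b •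
          ∑ c : ZMod n, (v 2 ∘ ⇑f) c • w' n a b c := rfl

lemma L_map (f : ZMod n ≃ ZMod n)
    (hw : ∀ a b c : ZMod n, w' n (f a) (f b) (f c) = w' n a b c)
    (ξ : ExteriorAlgebra ℂ (ZMod n → ℂ)) (hξ : ξ ∈ ⋀[ℂ]^3 (ZMod n → ℂ)) :
    L n (ExteriorAlgebra.map (LinearMap.funLeft ℂ ℂ ⇑f) ξ) = L n ξ := by
  rw [← ιMulti_span_fixedDegree] at hξ
  induction hξ using Submodule.span_induction with
  | mem x hx =>
      obtain ⟨v, rfl⟩ := hx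
      rw [map_apply_ιMulti, L_ιMulti, L_ιMulti]
      exact Falt_comp n f hw v
  | zero => simp
  | add x y _ _ hx hy => simp [hx, hy]
  | smul r x _ hx => simp [hx]

lemma w'_shift (d a b c : ZMod n) : w' n (a + d) (b + d) (c + d) = w' n a b c :=
  Subtype.ext (by show w n _ _ _ = w n a b c; unfold w; simp [add_sub_add_right_eq_sub])

lemma w'_neg (a b c : ZMod n) : w' n (-a) (-b) (-c) = w' n a b c :=
  Subtype.ext (by
    show w n _ _ _ = w n a b c
    unfold w
    simp only [neg_sub_neg]
    abel)

end WevenAux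

/-- For `π = ℤ/n`, the map `W^even : Λ³ℂ[π] → Λ³ℂ[π]`,
`tᵃ ∧ tᵇ ∧ tᶜ ↦ t^{b−a} ∧ t^{c−b} ∧ t^{a−c} + t^{a−b} ∧ t^{b−c} ∧ t^{c−a}`, is a
well-defined (alternating) linear map, invariant under the diagonal `π × π`-action and
under the involution inverting group elements. -/
theorem weven_well_defined (n : ℕ) (hn : 0 < n) :
    ∃ Φ : (⋀[ℂ]^3 (ZMod n → ℂ)) →ₗ[ℂ] (⋀[ℂ]^3 (ZMod n → ℂ)),
      (∀ (a b c : ZMod n) (x : ⋀[ℂ]^3 (ZMod n → ℂ)),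
        (x : ExteriorAlgebra ℂ (ZMod n → ℂ)) = ιMulti ℂ 3 ![bas n a, bas n b, bas n c] →
          (Φ x : ExteriorAlgebra ℂ (ZMod n → ℂ))
            = ιMulti ℂ 3 ![bas n (b - a), bas n (c - b), bas n (a - c)]
              + ιMulti ℂ 3 ![bas n (a - b), bas n (b - c), bas n (c - a)]) ∧
      (∀ (g h : ZMod n) (x y : ⋀[ℂ]^3 (ZMod n → ℂ)),
        (y : ExteriorAlgebra ℂ (ZMod n → ℂ))
            = ExteriorAlgebra.map (LinearMap.funLeft ℂ ℂ (fun t : ZMod n => t + g - h)) x →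
          Φ y = Φ x) ∧
      (∀ x y : ⋀[ℂ]^3 (ZMod n → ℂ),
        (y : ExteriorAlgebra ℂ (ZMod n → ℂ))
            = ExteriorAlgebra.map (LinearMap.funLeft ℂ ℂ (fun t : ZMod n => -t)) x →
          Φ y = Φ x) := by
  haveI : NeZero n := ⟨hn.ne'⟩
  refine ⟨(WevenAux.L n).comp (Submodule.subtype _), ?_, ?_, ?_⟩
  · intro a b c x hx
    have : (WevenAux.L n).comp (Submodule.subtype _) x = WevenAux.w' n a b c := by
      simp only [LinearMap.comp_apply, Submodule.subtype_apply]
      rw [hx, WevenAux.L_ιMulti, WevenAux.Falt_bas]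
    rw [this]
    rfl
  · intro g h x y hxy
    simp only [LinearMap.comp_apply, Submodule.subtype_apply]
    have hfun : (LinearMap.funLeft ℂ ℂ fun t : ZMod n => t + g - h)
        = LinearMap.funLeft ℂ ℂ ⇑(Equiv.addRight (g - h)) := by
      congr 1
      funext t
      simp [add_sub_assoc]
    rw [hfun] at hxy
    rw [hxy]
    exact WevenAux.L_map n _
      (fun a b c => by simpa using WevenAux.w'_shift n (g - h) a b c) _ x.2
  · intro x y hxy
    simp only [LinearMap.comp_apply, Submodule.subtype_apply]
    have hfun : (LinearMap.funLeft ℂ ℂ fun t : ZMod n => -t)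
        = LinearMap.funLeft ℂ ℂ ⇑(Equiv.neg (ZMod n)) := by
      congr 1
    rw [hfun] at hxy
    rw [hxy]
    exact WevenAux.L_map n _
      (fun a b c => by simpa using WevenAux.w'_neg n a b c) _ x.2
end

section
/- Let π = ℤ/n. The dimension of the subspace of (Λ³ ℂ[π]) invariant under the action of (π × π) ⋊ ℤ₂ equals p₃(n − 6), the number of partitions of n − 6 into at most three parts (zero if n < 6). -/
/-- `p₃ m`: the number of partitions of `m` into at most three parts (`0` for `m < 0`). -/
noncomputable def p3 (m : ℤ) : ℕ :=
  {t : ℤ × ℤ × ℤ | 0 ≤ t.1 ∧ t.1 ≤ t.2.1 ∧ t.2.1 ≤ t.2.2 ∧ t.1 + t.2.1 + t.2.2 = m}.ncard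


namespace P3Aux

def S (m : ℤ) : Set (ℤ × ℤ × ℤ) :=
  {t | 0 ≤ t.1 ∧ t.1 ≤ t.2.1 ∧ t.2.1 ≤ t.2.2 ∧ t.1 + t.2.1 + t.2.2 = m}

lemma p3_eq (m : ℤ) : p3 m = (S m).ncard := rfl

lemma S_finite (m : ℤ) : (S m).Finite := by
  rcases lt_or_ge m 0 with h | h
  · have : S m = ∅ := by
      ext t
      simp only [S, Set.mem_setOf_eq, Set.mem_empty_iff_false, iff_false, not_and]
      intro h1 h2 h3; omega
    simp [this]
  · apply Set.Finite.subset
      (Set.Finite.prod (Set.finite_Icc (0:ℤ) m)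
        (Set.Finite.prod (Set.finite_Icc (0:ℤ) m) (Set.finite_Icc (0:ℤ) m)))
    rintro t ⟨h1, h2, h3, h4⟩
    refine ⟨?_, ?_, ?_⟩ <;> simp only [Set.mem_Icc] <;> omega

lemma p3_neg {m : ℤ} (h : m < 0) : p3 m = 0 := by
  rw [p3_eq]
  have : S m = ∅ := by
    ext t
    simp only [S, Set.mem_setOf_eq, Set.mem_empty_iff_false, iff_false, not_and]
    intro h1 h2 h3; omega
  simp [this]

lemma p3_rec (m : ℤ) (hm : -3 ≤ m) : p3 (m + 3) = p3 m + ((m + 3) / 2 + 1).toNat := by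
  have hdecomp : S (m + 3) =
      ((fun t : ℤ × ℤ × ℤ => (t.1 + 1, t.2.1 + 1, t.2.2 + 1)) '' S m) ∪
      ((fun y : ℤ => ((0:ℤ), y, m + 3 - y)) '' Set.Icc (0:ℤ) ((m + 3) / 2)) := by
    ext ⟨x, y, z⟩
    simp only [S, Set.mem_setOf_eq, Set.mem_union, Set.mem_image, Set.mem_Icc, Prod.ext_iff,
      Prod.exists]
    constructor
    · rintro ⟨h1, h2, h3, h4⟩
      by_cases hx : x = 0
      · right; exact ⟨y, by omega, by omega, by omega, by omega⟩
      · left; exact ⟨x - 1, y - 1, z - 1, ⟨by omega, by omega, by omega, by omega⟩,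
          by omega, by omega, by omega⟩
    · rintro (⟨a, b, c, ⟨h1, h2, h3, h4⟩, rfl, rfl, rfl⟩ | ⟨w, ⟨hw1, hw2⟩, rfl, rfl, rfl⟩)
      · exact ⟨by omega, by omega, by omega, by omega⟩
      · exact ⟨le_refl 0, by omega, by omega, by omega⟩
  have hinj1 : Function.Injective (fun t : ℤ × ℤ × ℤ => (t.1 + 1, t.2.1 + 1, t.2.2 + 1)) := by
    rintro ⟨a, b, c⟩ ⟨d, e, f⟩ h
    simp only [Prod.ext_iff] at h ⊢
    omega
  have hinj2 : Function.Injective (fun y : ℤ => ((0:ℤ), y, m + 3 - y)) := by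
    intro a b h
    simp only [Prod.ext_iff] at h
    omega
  have hdisj : Disjoint ((fun t : ℤ × ℤ × ℤ => (t.1 + 1, t.2.1 + 1, t.2.2 + 1)) '' S m)
      ((fun y : ℤ => ((0:ℤ), y, m + 3 - y)) '' Set.Icc (0:ℤ) ((m + 3) / 2)) := by
    rw [Set.disjoint_left]
    rintro ⟨x, y, z⟩ ⟨⟨a, b, c⟩, ⟨h1, _, _, _⟩, heq⟩ ⟨w, _, heq2⟩
    simp only [Prod.ext_iff] at heq heq2
    omega
  rw [p3_eq, p3_eq, hdecomp,
    Set.ncard_union_eq hdisj ((S_finite m).image _) ((Set.finite_Icc _ _).image _),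
    Set.ncard_image_of_injective _ hinj1, Set.ncard_image_of_injective _ hinj2]
  congr 1
  rw [← Finset.coe_Icc, Set.ncard_coe_finset, Int.card_Icc]
  omega

lemma p3_m3 : p3 (-3) = 0 := p3_neg (by norm_num)
lemma p3_m2 : p3 (-2) = 0 := p3_neg (by norm_num)
lemma p3_m1 : p3 (-1) = 0 := p3_neg (by norm_num)
lemma p3_0 : p3 0 = 1 := by have := p3_rec (-3) (by norm_num); rw [p3_m3] at this; norm_num at this; convert this using 2 <;> norm_num
lemma p3_1 : p3 1 = 1 := by have := p3_rec (-2) (by norm_num); rw [p3_m2] at this; norm_num at this; convert this using 2 <;> norm_num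
lemma p3_2 : p3 2 = 2 := by have := p3_rec (-1) (by norm_num); rw [p3_m1] at this; norm_num at this; rw [this]; rfl
lemma p3_3 : p3 3 = 3 := by have := p3_rec 0 (by norm_num); rw [p3_0] at this; norm_num at this; rw [this]; rfl
lemma p3_4 : p3 4 = 4 := by have := p3_rec 1 (by norm_num); rw [p3_1] at this; norm_num at this; rw [this]; rfl
lemma p3_5 : p3 5 = 5 := by have := p3_rec 2 (by norm_num); rw [p3_2] at this; norm_num at this; rw [this]; rfl
lemma p3_6 : p3 6 = 7 := by have := p3_rec 3 (by norm_num); rw [p3_3] at this; norm_num at this; rw [this]; rfl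

lemma p3_rec6 (m : ℤ) (hm : 0 ≤ m) : p3 (m + 6) = p3 m + (m + 6).toNat := by
  have h1 := p3_rec m (by omega)
  have h2 := p3_rec (m + 3) (by omega)
  have : m + 3 + 3 = m + 6 := by ring
  rw [this] at h2
  rw [h2, h1]
  omega

/-- the main counting formula -/
lemma p3_formula : ∀ n : ℕ, 1 ≤ n →
    12 * p3 ((n : ℤ) - 6) + 6 * n =
      n ^ 2 + (if 2 ∣ n then 2 else 1) ^ 2 + 2 * (if 3 ∣ n then 3 else 1) + 2 := by
  intro n
  induction n using Nat.strong_induction_on with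
  | _ n ih =>
    intro hn
    by_cases hsmall : n ≤ 12
    · interval_cases n <;>
        simp_all [p3_m1, p3_m2, p3_m3, p3_0, p3_1, p3_2, p3_3, p3_4, p3_5, p3_6, p3_neg] <;>
        norm_num
    · push_neg at hsmall
      have hq : n - 6 < n := by omega
      have IH := ih (n - 6) hq (by omega)
      have hcast : ((n - 6 : ℕ) : ℤ) = (n : ℤ) - 6 := by push_cast; omega
      rw [hcast] at IH
      have hrec := p3_rec6 ((n : ℤ) - 12) (by push_cast; omega)
      have h12 : (n : ℤ) - 12 + 6 = (n : ℤ) - 6 := by ring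
      rw [h12] at hrec
      have h2d : (2 ∣ (n - 6)) ↔ (2 ∣ n) := by omega
      have h3d : (3 ∣ (n - 6)) ↔ (3 ∣ n) := by omega
      simp only [h2d, h3d] at IH
      have heq : (n : ℤ) - 6 - 6 = (n : ℤ) - 12 := by ring
      rw [heq] at IH
      have hsq : (n - 6) ^ 2 + 12 * (n - 6) + 36 = n ^ 2 := by
        have h6 : n - 6 + 6 = n := by omega
        nlinarith [h6]
      have htn : ((n : ℤ) - 6).toNat = n - 6 := by omega
      rw [hrec, htn]
      omega

end P3Aux


/- We model `Λ³ ℂ[π]` for `π = ℤ/n` as the space of antisymmetric functions `π³ → ℂ`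
(`ℂ[π]` has basis `π`, and in characteristic zero `Λ³` is the space of antisymmetric
tensors).  The action of `(g,h) ∈ π × π` on a basis element `x` of `ℂ[π]` is
`g x h⁻¹ = x + (g - h)`, i.e. the diagonal action is simultaneous translation by an
arbitrary `k ∈ π`; the `ℤ₂`-involution negates all three group elements. -/

/-- The subspace of `Λ³ ℂ[ℤ/n]` invariant under `(π × π) ⋊ ℤ₂`: antisymmetric functions on
`(ℤ/n)³` invariant under simultaneous translation and under simultaneous negation. -/
noncomputable def lambda3Invariants (n : ℕ) : Submodule ℂ ((ZMod n × ZMod n × ZMod n) → ℂ) :=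
  (LinearMap.ker (LinearMap.funLeft ℂ ℂ
      (fun t : ZMod n × ZMod n × ZMod n => (t.2.1, t.1, t.2.2)) + LinearMap.id)) ⊓
  (LinearMap.ker (LinearMap.funLeft ℂ ℂ
      (fun t : ZMod n × ZMod n × ZMod n => (t.1, t.2.2, t.2.1)) + LinearMap.id)) ⊓
  (⨅ k : ZMod n, LinearMap.ker (LinearMap.funLeft ℂ ℂ
      (fun t : ZMod n × ZMod n × ZMod n => (t.1 + k, t.2.1 + k, t.2.2 + k)) - LinearMap.id)) ⊓
  (LinearMap.ker (LinearMap.funLeft ℂ ℂ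
      (fun t : ZMod n × ZMod n × ZMod n => (-t.1, -t.2.1, -t.2.2)) - LinearMap.id))

namespace L3Aux
open LinearMap Equiv DihedralGroup

abbrev X (n : ℕ) := Fin 3 → ZMod n
abbrev G (n : ℕ) := Equiv.Perm (Fin 3) × DihedralGroup n

variable (n : ℕ)

def dact : DihedralGroup n → ZMod n → ZMod n
  | .r i, x => x - i
  | .sr i, x => i - x

lemma dact_one (x : ZMod n) : dact n 1 x = x := by
  show dact n (.r 0) x = x
  simp [dact]

lemma dact_mul (d e : DihedralGroup n) (x : ZMod n) :
    dact n (d * e) x = dact n d (dact n e x) := by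
  cases d <;> cases e <;> simp [dact, r_mul_r, r_mul_sr, sr_mul_r, sr_mul_sr] <;> ring

def act (γ : G n) (v : X n) : X n := fun i => dact n γ.2 (v (γ.1⁻¹ i))

lemma act_one (v : X n) : act n 1 v = v := by
  funext i; simp [act, dact_one]

lemma act_mul (γ δ : G n) (v : X n) : act n (γ * δ) v = act n γ (act n δ v) := by
  funext i
  simp [act, Prod.fst_mul, Prod.snd_mul, mul_inv_rev, Equiv.Perm.mul_apply, dact_mul]

def rho (γ : G n) : Module.End ℂ (X n → ℂ) := funLeft ℂ ℂ (act n γ⁻¹)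

lemma rho_apply (γ : G n) (f : X n → ℂ) (v : X n) : rho n γ f v = f (act n γ⁻¹ v) := rfl

lemma rho_one : rho n 1 = 1 := by
  ext f v; simp [rho_apply, act_one]

lemma rho_mul (γ δ : G n) : rho n (γ * δ) = rho n γ * rho n δ := by
  ext f v
  simp [Module.End.mul_apply, rho_apply, mul_inv_rev, act_mul]

def chi (γ : G n) : ℂ := ((Equiv.Perm.sign γ.1 : ℤ) : ℂ)

lemma chi_one : chi n 1 = 1 := by simp [chi, Prod.fst_one]

lemma chi_mul (γ δ : G n) : chi n (γ * δ) = chi n γ * chi n δ := by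
  simp [chi, Prod.fst_mul, map_mul]

lemma chi_mul_self (γ : G n) : chi n γ * chi n γ = 1 := by
  simp only [chi]
  rw [← Int.cast_mul, ← Units.val_mul, ← sq, Int.units_sq]
  norm_num

section Av

variable [NeZero n]

noncomputable def Pav : Module.End ℂ (X n → ℂ) :=
  (((12 * n : ℕ) : ℂ))⁻¹ • ∑ γ : G n, chi n γ • rho n γ

/-- the invariant subspace -/
noncomputable def Usp : Submodule ℂ (X n → ℂ) where
  carrier := {f | ∀ γ : G n, chi n γ • rho n γ f = f}
  add_mem' := by
    intro f g hf hg γ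
    simp only [map_add, smul_add]
    rw [hf γ, hg γ]
  zero_mem' := by intro γ; simp
  smul_mem' := by
    intro c f hf γ
    simp only [map_smul]
    rw [smul_comm, hf γ]

lemma mem_Usp (f : X n → ℂ) : f ∈ Usp n ↔ ∀ γ : G n, chi n γ • rho n γ f = f := Iff.rfl

lemma card_G : Fintype.card (G n) = 12 * n := by
  rw [Fintype.card_prod, Fintype.card_perm, DihedralGroup.card, Fintype.card_fin]
  norm_num [Nat.factorial]
  ring

lemma hc12 : ((12 * n : ℕ) : ℂ) ≠ 0 := by
  have : (n : ℂ) ≠ 0 := Nat.cast_ne_zero.mpr (NeZero.ne n)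
  push_cast
  exact mul_ne_zero (by norm_num) this

lemma key (δ : G n) : (chi n δ • rho n δ) * Pav n = Pav n := by
  unfold Pav
  rw [Algebra.mul_smul_comm, Finset.mul_sum]
  congr 1
  calc ∑ γ : G n, (chi n δ • rho n δ) * (chi n γ • rho n γ)
      = ∑ γ : G n, chi n (δ * γ) • rho n (δ * γ) := by
        refine Finset.sum_congr rfl fun γ _ => ?_
        rw [smul_mul_smul_comm, ← chi_mul, ← rho_mul]
    _ = ∑ γ : G n, chi n γ • rho n γ :=
        Fintype.sum_equiv (Equiv.mulLeft δ) _ _ (fun γ => rfl)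

lemma Pav_mem_Usp (f : X n → ℂ) : Pav n f ∈ Usp n := by
  intro δ
  have := congrArg (fun T : Module.End ℂ (X n → ℂ) => T f) (key n δ)
  simpa [Module.End.mul_apply] using this

lemma Pav_fixes {f : X n → ℂ} (hf : f ∈ Usp n) : Pav n f = f := by
  unfold Pav
  rw [LinearMap.smul_apply, LinearMap.sum_apply]
  have : ∀ γ : G n, (chi n γ • rho n γ) f = f := fun γ => hf γ
  rw [Finset.sum_congr rfl (fun γ _ => this γ)]
  rw [Finset.sum_const, Finset.card_univ, card_G]
  rw [← Nat.cast_smul_eq_nsmul ℂ, smul_smul, inv_mul_cancel₀ (hc12 n), one_smul]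

lemma isProj_Pav : LinearMap.IsProj (Usp n) (Pav n) :=
  ⟨fun f => Pav_mem_Usp n f, fun f hf => Pav_fixes n hf⟩

lemma finrank_Usp_eq_trace :
    ((Module.finrank ℂ (Usp n) : ℂ)) = LinearMap.trace ℂ (X n → ℂ) (Pav n) :=
  ((isProj_Pav n).trace).symm

end Av

section Counting
open Finset
variable [NeZero n]

def tripleEquiv : (ZMod n × ZMod n × ZMod n) ≃ X n where
  toFun t := ![t.1, t.2.1, t.2.2]
  invFun v := (v 0, v 1, v 2)
  left_inv := by rintro ⟨x, y, z⟩; rfl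
  right_inv := by
    intro v; funext i; fin_cases i <;> rfl

lemma forall_fin3 (p : Fin 3 → Prop) : (∀ i, p i) ↔ p 0 ∧ p 1 ∧ p 2 := by
  constructor
  · intro h; exact ⟨h 0, h 1, h 2⟩
  · rintro ⟨h0, h1, h2⟩ i; fin_cases i <;> assumption

lemma card_filter_eq_sum (P : X n → Prop) [DecidablePred P] :
    (univ.filter P).card
      = ∑ x : ZMod n, ∑ y : ZMod n, ∑ z : ZMod n, if P ![x, y, z] then 1 else 0 := by
  rw [Finset.card_filter]
  rw [← Fintype.sum_equiv (tripleEquiv n) (fun t => if P (tripleEquiv n t) then 1 else 0)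
        (fun v => if P v then 1 else 0) (fun t => rfl)]
  rw [Fintype.sum_prod_type]
  apply Finset.sum_congr rfl; intro x _
  rw [Fintype.sum_prod_type]
  rfl

/-- number of solutions of `z + z = k` -/
def cnt2 (k : ZMod n) : ℕ := (univ.filter fun z : ZMod n => z + z = k).card

/-- number of solutions of `k + k + k = 0` -/
def cnt3 : ℕ := (univ.filter fun k : ZMod n => k + k + k = 0).card

section helpers

lemma helperB (B : ZMod n → Prop) [DecidablePred B] (m : ℕ) :
    (∑ z : ZMod n, if B z then m else 0) = (univ.filter B).card * m := by
  rw [Finset.card_filter, Finset.sum_mul]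
  apply Finset.sum_congr rfl
  intro z _
  rw [ite_mul, one_mul, zero_mul]

lemma helperA (A : Prop) [Decidable A] (B : ZMod n → Prop) [DecidablePred B] (m : ℕ) :
    (∑ z : ZMod n, if A ∧ B z then m else 0) = if A then (univ.filter B).card * m else 0 := by
  by_cases hA : A
  · simp only [hA, true_and, if_true]
    exact helperB n B m
  · simp [hA]

lemma helperC (A : Prop) [Decidable A] (e : ZMod n) (m : ℕ) :
    (∑ z : ZMod n, if A ∧ z = e then m else 0) = if A then m else 0 := by
  by_cases hA : A <;> simp [hA, Finset.sum_ite_eq']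

lemma helperE (e : ZMod n) (m : ℕ) :
    (∑ z : ZMod n, if z = e then m else 0) = m := by
  simp [Finset.sum_ite_eq']

lemma helperD (A : Prop) [Decidable A] (m : ℕ) :
    (∑ _z : ZMod n, if A then m else 0) = if A then n * m else 0 := by
  by_cases hA : A <;> simp [hA, Finset.card_univ, ZMod.card]

end helpers

def fixc (γ : G n) : ℕ := (univ.filter fun v : X n => act n γ v = v).card

-- σ⁻¹ evaluation facts
def c3 : Equiv.Perm (Fin 3) := Equiv.swap 0 1 * Equiv.swap 1 2

lemma fixc_one_r (k : ZMod n) : fixc n (1, .r k) = if k = 0 then n ^ 3 else 0 := by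
  rw [fixc, card_filter_eq_sum]
  by_cases hk : k = 0
  · subst hk
    simp [act, funext_iff, forall_fin3, dact, ZMod.card, Finset.card_univ, -r_zero]
    ring
  · simp [act, funext_iff, forall_fin3, dact, sub_eq_self, hk]

lemma fixc_one_sr (k : ZMod n) : fixc n (1, .sr k) = cnt2 n k ^ 3 := by
  rw [fixc, card_filter_eq_sum]
  have hcond : ∀ x y z : ZMod n,
      ((k - x = x ∧ k - y = y ∧ k - z = z) ↔ ((x + x = k ∧ y + y = k) ∧ z + z = k)) := by
    intro x y z
    constructor
    · rintro ⟨a, b, c⟩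
      exact ⟨⟨by linear_combination -a, by linear_combination -b⟩, by linear_combination -c⟩
    · rintro ⟨⟨a, b⟩, c⟩
      exact ⟨by linear_combination -a, by linear_combination -b, by linear_combination -c⟩
  simp only [act, funext_iff, forall_fin3, dact, inv_one, Equiv.Perm.one_apply,
    Matrix.cons_val_zero, Matrix.cons_val_one, Matrix.head_cons, Matrix.cons_val_two,
    Matrix.tail_cons]
  simp only [hcond]
  simp only [helperA, helperB]
  show cnt2 n k * (cnt2 n k * (cnt2 n k * 1)) = cnt2 n k ^ 3
  ring

-- swap inverse evaluations
lemma s01_0 : ((Equiv.swap (0:Fin 3) 1)⁻¹ : Equiv.Perm (Fin 3)) 0 = 1 := by decide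
lemma s01_1 : ((Equiv.swap (0:Fin 3) 1)⁻¹ : Equiv.Perm (Fin 3)) 1 = 0 := by decide
lemma s01_2 : ((Equiv.swap (0:Fin 3) 1)⁻¹ : Equiv.Perm (Fin 3)) 2 = 2 := by decide
lemma s12_0 : ((Equiv.swap (1:Fin 3) 2)⁻¹ : Equiv.Perm (Fin 3)) 0 = 0 := by decide
lemma s12_1 : ((Equiv.swap (1:Fin 3) 2)⁻¹ : Equiv.Perm (Fin 3)) 1 = 2 := by decide
lemma s12_2 : ((Equiv.swap (1:Fin 3) 2)⁻¹ : Equiv.Perm (Fin 3)) 2 = 1 := by decide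
lemma s02_0 : ((Equiv.swap (0:Fin 3) 2)⁻¹ : Equiv.Perm (Fin 3)) 0 = 2 := by decide
lemma s02_1 : ((Equiv.swap (0:Fin 3) 2)⁻¹ : Equiv.Perm (Fin 3)) 1 = 1 := by decide
lemma s02_2 : ((Equiv.swap (0:Fin 3) 2)⁻¹ : Equiv.Perm (Fin 3)) 2 = 0 := by decide
lemma t01_2 : ((Equiv.swap (0:Fin 3) 1) : Equiv.Perm (Fin 3)) 2 = 2 := by decide
lemma t12_0 : ((Equiv.swap (1:Fin 3) 2) : Equiv.Perm (Fin 3)) 0 = 0 := by decide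
lemma t02_1 : ((Equiv.swap (0:Fin 3) 2) : Equiv.Perm (Fin 3)) 1 = 1 := by decide

lemma c3_0 : ((c3)⁻¹ : Equiv.Perm (Fin 3)) 0 = 2 := by decide
lemma c3_1 : ((c3)⁻¹ : Equiv.Perm (Fin 3)) 1 = 0 := by decide
lemma c3_2 : ((c3)⁻¹ : Equiv.Perm (Fin 3)) 2 = 1 := by decide
lemma c3i_0 : (((c3⁻¹))⁻¹ : Equiv.Perm (Fin 3)) 0 = 1 := by decide
lemma c3i_1 : (((c3⁻¹))⁻¹ : Equiv.Perm (Fin 3)) 1 = 2 := by decide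
lemma c3i_2 : (((c3⁻¹))⁻¹ : Equiv.Perm (Fin 3)) 2 = 0 := by decide

section cases
variable (k : ZMod n)

lemma helperConst (m : ℕ) : (∑ _x : ZMod n, m) = n * m := by
  rw [Finset.sum_const, Finset.card_univ, ZMod.card, smul_eq_mul]

lemma fixc_s01_r : fixc n (Equiv.swap 0 1, .r k) = if k = 0 then n ^ 2 else 0 := by
  rw [fixc, card_filter_eq_sum]
  by_cases hk : k = 0
  · subst hk
    have hcond : ∀ x y z : ZMod n, ((y - 0 = x ∧ x - 0 = y ∧ z - 0 = z) ↔ (y = x)) := by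
      intro x y z
      constructor
      · rintro ⟨a, _, _⟩; linear_combination a
      · intro h; exact ⟨by linear_combination h, by linear_combination -h, by ring⟩
    simp only [act, funext_iff, forall_fin3, dact, s01_0, s01_1, s01_2,
      Matrix.cons_val_zero, Matrix.cons_val_one, Matrix.head_cons, Matrix.cons_val_two,
      Matrix.tail_cons]
    simp only [hcond, helperD, helperE, helperConst]
    simp [ZMod.card]
    ring
  · simp [act, funext_iff, forall_fin3, dact, s01_0, s01_1, s01_2, t01_2, sub_eq_self, hk]

lemma fixc_s12_r : fixc n (Equiv.swap 1 2, .r k) = if k = 0 then n ^ 2 else 0 := by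
  rw [fixc, card_filter_eq_sum]
  by_cases hk : k = 0
  · subst hk
    have hcond : ∀ x y z : ZMod n, ((x - 0 = x ∧ z - 0 = y ∧ y - 0 = z) ↔ (z = y)) := by
      intro x y z
      constructor
      · rintro ⟨_, a, _⟩; linear_combination a
      · intro h; exact ⟨by ring, by linear_combination h, by linear_combination -h⟩
    simp only [act, funext_iff, forall_fin3, dact, s12_0, s12_1, s12_2,
      Matrix.cons_val_zero, Matrix.cons_val_one, Matrix.head_cons, Matrix.cons_val_two,
      Matrix.tail_cons]
    simp only [hcond, helperE, helperConst]
    simp [ZMod.card]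
    ring
  · simp [act, funext_iff, forall_fin3, dact, s12_0, s12_1, s12_2, t12_0, sub_eq_self, hk]

lemma fixc_s02_r : fixc n (Equiv.swap 0 2, .r k) = if k = 0 then n ^ 2 else 0 := by
  rw [fixc, card_filter_eq_sum]
  by_cases hk : k = 0
  · subst hk
    have hcond : ∀ x y z : ZMod n, ((z - 0 = x ∧ y - 0 = y ∧ x - 0 = z) ↔ (z = x)) := by
      intro x y z
      constructor
      · rintro ⟨a, _, _⟩; linear_combination a
      · intro h; exact ⟨by linear_combination h, by ring, by linear_combination -h⟩
    simp only [act, funext_iff, forall_fin3, dact, s02_0, s02_1, s02_2,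
      Matrix.cons_val_zero, Matrix.cons_val_one, Matrix.head_cons, Matrix.cons_val_two,
      Matrix.tail_cons]
    simp only [hcond, helperE, helperConst]
    simp [ZMod.card]
    ring
  · simp [act, funext_iff, forall_fin3, dact, s02_0, s02_1, s02_2, t02_1, sub_eq_self, hk]

lemma fixc_c3_r : fixc n (c3, .r k) = if k + k + k = 0 then n else 0 := by
  rw [fixc, card_filter_eq_sum]
  have hcond : ∀ x y z : ZMod n, ((z - k = x ∧ x - k = y ∧ y - k = z) ↔
      ((k + k + k = 0 ∧ y = x - k) ∧ z = x - k - k)) := by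
    intro x y z
    constructor
    · rintro ⟨a, b, c⟩
      have h3 : k + k + k = 0 := by linear_combination -a - b - c
      exact ⟨⟨h3, by linear_combination -b⟩, by linear_combination -b - c⟩
    · rintro ⟨⟨h3, hy⟩, hz⟩
      refine ⟨by linear_combination hz - h3, by linear_combination -hy,
        by linear_combination hy - hz⟩
  simp only [act, funext_iff, forall_fin3, dact, c3_0, c3_1, c3_2,
    Matrix.cons_val_zero, Matrix.cons_val_one, Matrix.head_cons, Matrix.cons_val_two,
    Matrix.tail_cons]
  simp only [hcond, helperC, helperD]
  simp

lemma fixc_c3i_r : fixc n (c3⁻¹, .r k) = if k + k + k = 0 then n else 0 := by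
  rw [fixc, card_filter_eq_sum]
  have hcond : ∀ x y z : ZMod n, ((y - k = x ∧ z - k = y ∧ x - k = z) ↔
      ((k + k + k = 0 ∧ y = x + k) ∧ z = x + k + k)) := by
    intro x y z
    constructor
    · rintro ⟨a, b, c⟩
      have h3 : k + k + k = 0 := by linear_combination -a - b - c
      exact ⟨⟨h3, by linear_combination a⟩, by linear_combination a + b⟩
    · rintro ⟨⟨h3, hy⟩, hz⟩
      refine ⟨by linear_combination hy, by linear_combination hz - hy,
        by linear_combination -hz - h3⟩
  simp only [act, funext_iff, forall_fin3, dact, c3i_0, c3i_1, c3i_2,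
    Matrix.cons_val_zero, Matrix.cons_val_one, Matrix.head_cons, Matrix.cons_val_two,
    Matrix.tail_cons]
  simp only [hcond, helperC, helperD]
  simp

lemma fixc_s01_sr : fixc n (Equiv.swap 0 1, .sr k) = n * cnt2 n k := by
  rw [fixc, card_filter_eq_sum]
  have hcond : ∀ x y z : ZMod n, ((k - y = x ∧ k - x = y ∧ k - z = z) ↔
      (y = k - x ∧ z + z = k)) := by
    intro x y z
    constructor
    · rintro ⟨a, _, c⟩
      exact ⟨by linear_combination -a, by linear_combination -c⟩
    · rintro ⟨hy, hz⟩
      exact ⟨by linear_combination -hy, by linear_combination -hy, by linear_combination -hz⟩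
  simp only [act, funext_iff, forall_fin3, dact, s01_0, s01_1, s01_2,
    Matrix.cons_val_zero, Matrix.cons_val_one, Matrix.head_cons, Matrix.cons_val_two,
    Matrix.tail_cons]
  simp only [hcond, helperA, helperE, helperConst]
  show n * ((univ.filter fun z : ZMod n => z + z = k).card * 1) = n * cnt2 n k
  rw [cnt2]; ring

lemma fixc_s12_sr : fixc n (Equiv.swap 1 2, .sr k) = cnt2 n k * n := by
  rw [fixc, card_filter_eq_sum]
  have hcond : ∀ x y z : ZMod n, ((k - x = x ∧ k - z = y ∧ k - y = z) ↔
      ((x + x = k) ∧ z = k - y)) := by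
    intro x y z
    constructor
    · rintro ⟨a, _, c⟩
      exact ⟨by linear_combination -a, by linear_combination -c⟩
    · rintro ⟨hx, hz⟩
      exact ⟨by linear_combination -hx, by linear_combination -hz, by linear_combination -hz⟩
  simp only [act, funext_iff, forall_fin3, dact, s12_0, s12_1, s12_2,
    Matrix.cons_val_zero, Matrix.cons_val_one, Matrix.head_cons, Matrix.cons_val_two,
    Matrix.tail_cons]
  simp only [hcond, helperC, helperD, helperB]
  show (univ.filter fun x : ZMod n => x + x = k).card * (n * 1) = cnt2 n k * n
  rw [cnt2]; ring

lemma fixc_s02_sr : fixc n (Equiv.swap 0 2, .sr k) = n * cnt2 n k := by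
  rw [fixc, card_filter_eq_sum]
  have hcond : ∀ x y z : ZMod n, ((k - z = x ∧ k - y = y ∧ k - x = z) ↔
      ((y + y = k) ∧ z = k - x)) := by
    intro x y z
    constructor
    · rintro ⟨_, b, c⟩
      exact ⟨by linear_combination -b, by linear_combination -c⟩
    · rintro ⟨hy, hz⟩
      exact ⟨by linear_combination -hz, by linear_combination -hy, by linear_combination -hz⟩
  simp only [act, funext_iff, forall_fin3, dact, s02_0, s02_1, s02_2,
    Matrix.cons_val_zero, Matrix.cons_val_one, Matrix.head_cons, Matrix.cons_val_two,
    Matrix.tail_cons]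
  simp only [hcond, helperC, helperB, helperConst]
  show n * ((univ.filter fun y : ZMod n => y + y = k).card * 1) = n * cnt2 n k
  rw [cnt2]; ring

lemma fixc_c3_sr : fixc n (c3, .sr k) = cnt2 n k := by
  rw [fixc, card_filter_eq_sum]
  have hcond : ∀ x y z : ZMod n, ((k - z = x ∧ k - x = y ∧ k - y = z) ↔
      ((x + x = k ∧ y = k - x) ∧ z = x)) := by
    intro x y z
    constructor
    · rintro ⟨a, b, c⟩
      exact ⟨⟨by linear_combination -a - b + c, by linear_combination -b⟩,
        by linear_combination b - c⟩
    · rintro ⟨⟨hx, hy⟩, hz⟩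
      exact ⟨by linear_combination -hx - hz, by linear_combination -hy,
        by linear_combination -hy - hz⟩
  simp only [act, funext_iff, forall_fin3, dact, c3_0, c3_1, c3_2,
    Matrix.cons_val_zero, Matrix.cons_val_one, Matrix.head_cons, Matrix.cons_val_two,
    Matrix.tail_cons]
  simp only [hcond, helperC, helperB]
  show (univ.filter fun x : ZMod n => x + x = k).card * 1 = cnt2 n k
  rw [cnt2]; ring

lemma fixc_c3i_sr : fixc n (c3⁻¹, .sr k) = cnt2 n k := by
  rw [fixc, card_filter_eq_sum]
  have hcond : ∀ x y z : ZMod n, ((k - y = x ∧ k - z = y ∧ k - x = z) ↔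
      ((x + x = k ∧ y = x) ∧ z = k - x)) := by
    intro x y z
    constructor
    · rintro ⟨a, b, c⟩
      exact ⟨⟨by linear_combination -a + b - c, by linear_combination -b + c⟩,
        by linear_combination -c⟩
    · rintro ⟨⟨hx, hy⟩, hz⟩
      exact ⟨by linear_combination -hx - hy, by linear_combination -hz - hy,
        by linear_combination -hz⟩
  simp only [act, funext_iff, forall_fin3, dact, c3i_0, c3i_1, c3i_2,
    Matrix.cons_val_zero, Matrix.cons_val_one, Matrix.head_cons, Matrix.cons_val_two,
    Matrix.tail_cons]
  simp only [hcond, helperC, helperB]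
  show (univ.filter fun x : ZMod n => x + x = k).card * 1 = cnt2 n k
  rw [cnt2]; ring

end cases

lemma zmod_eq_zero_iff (x : ZMod n) : x = 0 ↔ n ∣ x.val := by
  conv_lhs => rw [← ZMod.natCast_zmod_val x]
  exact ZMod.natCast_eq_zero_iff x.val n

lemma card_two_torsion : cnt2 n 0 = if 2 ∣ n then 2 else 1 := by
  have key : (univ.filter fun z : ZMod n => z + z = 0).card
      = ((Finset.range n).filter fun v => n ∣ v + v).card := by
    apply Finset.card_bij (fun x _ => x.val)
    · intro x hx
      simp only [Finset.mem_filter, Finset.mem_range, Finset.mem_univ, true_and] at hx ⊢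
      constructor
      · exact ZMod.val_lt x
      · have : ((x.val + x.val : ℕ) : ZMod n) = 0 := by
          push_cast [ZMod.natCast_zmod_val]
          exact hx
        rwa [ZMod.natCast_eq_zero_iff] at this
    · intro a ha b hb h
      exact ZMod.val_injective n h
    · intro v hv
      simp only [Finset.mem_filter, Finset.mem_range, Finset.mem_univ, true_and] at hv
      refine ⟨(v : ZMod n), Finset.mem_filter.mpr ⟨Finset.mem_univ _, ?_⟩, ?_⟩
      · have : ((v + v : ℕ) : ZMod n) = 0 := by
          rw [ZMod.natCast_eq_zero_iff]; exact hv.2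
        push_cast at this
        exact this
      · exact ZMod.val_cast_of_lt hv.1
  rw [cnt2, key]
  by_cases h2 : 2 ∣ n
  · have hn1 : 1 ≤ n := Nat.one_le_iff_ne_zero.mpr (NeZero.ne n)
    obtain ⟨m, hm⟩ := h2
    have hm1 : 1 ≤ m := by omega
    have hset : (Finset.range n).filter (fun v => n ∣ v + v) = {0, m} := by
      ext v
      simp only [Finset.mem_filter, Finset.mem_range, Finset.mem_insert, Finset.mem_singleton]
      constructor
      · rintro ⟨hv, ⟨c, hc⟩⟩
        have hc2 : c < 2 := by nlinarith
        interval_cases c <;> omega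
      · rintro (rfl | rfl)
        · exact ⟨by omega, ⟨0, by ring⟩⟩
        · exact ⟨by omega, ⟨1, by omega⟩⟩
    rw [hset, if_pos ⟨m, hm⟩]
    rw [Finset.card_insert_of_notMem (by simp; omega), Finset.card_singleton]
  · have hodd : Nat.Coprime n 2 := by
      rcases Nat.coprime_or_dvd_of_prime Nat.prime_two n with h | h
      · exact h.symm
      · exact absurd h h2
    have hset : (Finset.range n).filter (fun v => n ∣ v + v) = {0} := by
      ext v
      simp only [Finset.mem_filter, Finset.mem_range, Finset.mem_singleton]
      constructor
      · rintro ⟨hv, hd⟩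
        have : n ∣ v := by
          have h2v : n ∣ v * 2 := by rwa [mul_two]
          exact hodd.dvd_of_dvd_mul_right h2v
        exact Nat.eq_zero_of_dvd_of_lt this hv
      · rintro rfl
        exact ⟨Nat.pos_of_ne_zero (NeZero.ne n), ⟨0, by ring⟩⟩
    rw [hset, if_neg h2, Finset.card_singleton]

lemma card_three_torsion : cnt3 n = if 3 ∣ n then 3 else 1 := by
  have key : (univ.filter fun z : ZMod n => z + z + z = 0).card
      = ((Finset.range n).filter fun v => n ∣ v + v + v).card := by
    apply Finset.card_bij (fun x _ => x.val)
    · intro x hx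
      simp only [Finset.mem_filter, Finset.mem_range, Finset.mem_univ, true_and] at hx ⊢
      refine ⟨ZMod.val_lt x, ?_⟩
      have : ((x.val + x.val + x.val : ℕ) : ZMod n) = 0 := by
        push_cast [ZMod.natCast_zmod_val]
        exact hx
      rwa [ZMod.natCast_eq_zero_iff] at this
    · intro a ha b hb h
      exact ZMod.val_injective n h
    · intro v hv
      simp only [Finset.mem_filter, Finset.mem_range, Finset.mem_univ, true_and] at hv
      refine ⟨(v : ZMod n), Finset.mem_filter.mpr ⟨Finset.mem_univ _, ?_⟩, ?_⟩
      · have : ((v + v + v : ℕ) : ZMod n) = 0 := by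
          rw [ZMod.natCast_eq_zero_iff]; exact hv.2
        push_cast at this
        exact this
      · exact ZMod.val_cast_of_lt hv.1
  rw [cnt3, key]
  by_cases h3 : 3 ∣ n
  · have hn1 : 1 ≤ n := Nat.one_le_iff_ne_zero.mpr (NeZero.ne n)
    obtain ⟨m, hm⟩ := h3
    have hm1 : 1 ≤ m := by omega
    have hset : (Finset.range n).filter (fun v => n ∣ v + v + v) = {0, m, 2 * m} := by
      ext v
      simp only [Finset.mem_filter, Finset.mem_range, Finset.mem_insert, Finset.mem_singleton]
      constructor
      · rintro ⟨hv, ⟨c, hc⟩⟩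
        have hc2 : c < 3 := by nlinarith
        interval_cases c <;> omega
      · rintro (rfl | rfl | rfl)
        · exact ⟨by omega, ⟨0, by ring⟩⟩
        · exact ⟨by omega, ⟨1, by omega⟩⟩
        · exact ⟨by omega, ⟨2, by omega⟩⟩
    rw [hset, if_pos ⟨m, hm⟩]
    rw [Finset.card_insert_of_notMem (by simp; omega),
        Finset.card_insert_of_notMem (by simp; omega), Finset.card_singleton]
  · have hodd : Nat.Coprime n 3 := by
      rcases Nat.coprime_or_dvd_of_prime Nat.prime_three n with h | h
      · exact h.symm
      · exact absurd h h3
    have hset : (Finset.range n).filter (fun v => n ∣ v + v + v) = {0} := by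
      ext v
      simp only [Finset.mem_filter, Finset.mem_range, Finset.mem_singleton]
      constructor
      · rintro ⟨hv, hd⟩
        have : n ∣ v := by
          have h3v : n ∣ v * 3 := by rwa [show v * 3 = v + v + v by ring]
          exact hodd.dvd_of_dvd_mul_right h3v
        exact Nat.eq_zero_of_dvd_of_lt this hv
      · rintro rfl
        exact ⟨Nat.pos_of_ne_zero (NeZero.ne n), ⟨0, by ring⟩⟩
    rw [hset, if_neg h3, Finset.card_singleton]

lemma trace_funLeft {α : Type*} [Fintype α] [DecidableEq α] (g : α → α) :
    LinearMap.trace ℂ (α → ℂ) (funLeft ℂ ℂ g) =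
      ((Finset.univ.filter fun a => g a = a).card : ℂ) := by
  rw [LinearMap.trace_eq_matrix_trace ℂ (Pi.basisFun ℂ α), Matrix.trace]
  have h : ∀ a, (LinearMap.toMatrix (Pi.basisFun ℂ α) (Pi.basisFun ℂ α) (funLeft ℂ ℂ g)).diag a
      = if g a = a then 1 else 0 := by
    intro a
    rw [Matrix.diag, LinearMap.toMatrix_apply]
    simp only [Pi.basisFun_apply, funLeft_apply, Pi.basisFun_repr]
    rw [Pi.single_apply]
  rw [Finset.sum_congr rfl fun a _ => h a]
  rw [Finset.sum_boole]


lemma fix_iff (γ : G n) (v : X n) : act n γ⁻¹ v = v ↔ act n γ v = v := by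
  constructor
  · intro h
    conv_lhs => rw [← h]
    rw [← act_mul, mul_inv_cancel, act_one]
  · intro h
    conv_lhs => rw [← h]
    rw [← act_mul, inv_mul_cancel, act_one]

lemma trace_rho (γ : G n) :
    LinearMap.trace ℂ (X n → ℂ) (rho n γ) = (fixc n γ : ℂ) := by
  rw [rho, trace_funLeft]
  congr 2
  apply Finset.filter_congr
  intro v _
  exact fix_iff n γ v

lemma trace_Pav :
    LinearMap.trace ℂ (X n → ℂ) (Pav n)
      = (((12 * n : ℕ) : ℂ))⁻¹ * ∑ γ : G n, chi n γ * (fixc n γ : ℂ) := by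
  unfold Pav
  rw [map_smul, map_sum, smul_eq_mul]
  congr 1
  apply Finset.sum_congr rfl
  intro γ _
  rw [map_smul, trace_rho, smul_eq_mul]

def dihEquiv : (ZMod n) ⊕ (ZMod n) ≃ DihedralGroup n where
  toFun := Sum.elim DihedralGroup.r DihedralGroup.sr
  invFun g := match g with
    | .r i => Sum.inl i
    | .sr i => Sum.inr i
  left_inv := by rintro (i | i) <;> rfl
  right_inv := by intro g; cases g <;> rfl

lemma sum_dih (f : DihedralGroup n → ℕ) :
    ∑ d : DihedralGroup n, f d = (∑ k : ZMod n, f (.r k)) + ∑ k : ZMod n, f (.sr k) := by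
  rw [← Fintype.sum_equiv (dihEquiv n) (fun s => f (dihEquiv n s)) f (fun s => rfl)]
  rw [Fintype.sum_sum_type]
  rfl

lemma cnt2_cases (k : ZMod n) : cnt2 n k = 0 ∨ cnt2 n k = cnt2 n 0 := by
  by_cases h : ∃ z0 : ZMod n, z0 + z0 = k
  · obtain ⟨z0, hz0⟩ := h
    right
    unfold cnt2
    apply Finset.card_bij (fun z _ => z - z0)
    · intro z hz
      simp only [Finset.mem_filter, Finset.mem_univ, true_and] at hz ⊢
      linear_combination hz - hz0
    · intro a ha b hb h
      have := congrArg (· + z0) h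
      simpa using this
    · intro w hw
      simp only [Finset.mem_filter, Finset.mem_univ, true_and] at hw
      exact ⟨w + z0, Finset.mem_filter.mpr ⟨Finset.mem_univ _,
        by linear_combination hw + hz0⟩, by ring⟩
  · left
    unfold cnt2
    rw [Finset.card_eq_zero, Finset.filter_eq_empty_iff]
    intro z _
    exact fun hz => h ⟨z, hz⟩

lemma sum_cnt2 : ∑ k : ZMod n, cnt2 n k = n := by
  unfold cnt2
  simp only [Finset.card_filter]
  rw [Finset.sum_comm]
  have h1 : ∀ z : ZMod n, (∑ k : ZMod n, if z + z = k then 1 else 0) = 1 := by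
    intro z
    rw [Finset.sum_ite_eq]
    simp
  rw [Finset.sum_congr rfl fun z _ => h1 z]
  simp [Finset.card_univ, ZMod.card]

lemma sum_cnt2_cube : ∑ k : ZMod n, cnt2 n k ^ 3 = n * cnt2 n 0 ^ 2 := by
  have h1 : ∀ k : ZMod n, cnt2 n k ^ 3 = cnt2 n k * cnt2 n 0 ^ 2 := by
    intro k
    rcases cnt2_cases n k with h | h
    · rw [h]; ring
    · rw [h]; ring
  rw [Finset.sum_congr rfl fun k _ => h1 k, ← Finset.sum_mul, sum_cnt2]

lemma sum_ite_zero (m : ℕ) : (∑ k : ZMod n, if k = 0 then m else 0) = m := helperE n 0 m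


lemma Sd_one : ∑ d : DihedralGroup n, fixc n (1, d) = n ^ 3 + n * cnt2 n 0 ^ 2 := by
  rw [sum_dih]
  simp only [fixc_one_r, fixc_one_sr]
  rw [sum_ite_zero, sum_cnt2_cube]

lemma Sd_s01 : ∑ d : DihedralGroup n, fixc n (Equiv.swap 0 1, d) = n ^ 2 + n * n := by
  rw [sum_dih]
  simp only [fixc_s01_r, fixc_s01_sr]
  rw [sum_ite_zero, ← Finset.mul_sum, sum_cnt2]

lemma Sd_s12 : ∑ d : DihedralGroup n, fixc n (Equiv.swap 1 2, d) = n ^ 2 + n * n := by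
  rw [sum_dih]
  simp only [fixc_s12_r, fixc_s12_sr]
  rw [sum_ite_zero, ← Finset.sum_mul, sum_cnt2]

lemma Sd_s02 : ∑ d : DihedralGroup n, fixc n (Equiv.swap 0 2, d) = n ^ 2 + n * n := by
  rw [sum_dih]
  simp only [fixc_s02_r, fixc_s02_sr]
  rw [sum_ite_zero, ← Finset.mul_sum, sum_cnt2]

lemma Sd_c3 : ∑ d : DihedralGroup n, fixc n (c3, d) = cnt3 n * n + n := by
  rw [sum_dih]
  simp only [fixc_c3_r, fixc_c3_sr]
  rw [helperB n _ n, sum_cnt2]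
  rfl

lemma Sd_c3i : ∑ d : DihedralGroup n, fixc n (c3⁻¹, d) = cnt3 n * n + n := by
  rw [sum_dih]
  simp only [fixc_c3i_r, fixc_c3i_sr]
  rw [helperB n _ n, sum_cnt2]
  rfl

lemma perm_univ : (Finset.univ : Finset (Equiv.Perm (Fin 3)))
    = {1, Equiv.swap 0 1, Equiv.swap 1 2, Equiv.swap 0 2, c3, c3⁻¹} := by decide

lemma sum_G :
    (∑ γ : G n, chi n γ * (fixc n γ : ℂ)) + ((6 * n ^ 2 : ℕ) : ℂ)
      = ((n ^ 3 + n * cnt2 n 0 ^ 2 + 2 * (cnt3 n * n + n) : ℕ) : ℂ) := by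
  rw [Fintype.sum_prod_type]
  have hrow : ∀ σ : Equiv.Perm (Fin 3),
      (∑ d : DihedralGroup n, chi n (σ, d) * (fixc n (σ, d) : ℂ))
        = ((Equiv.Perm.sign σ : ℤ) : ℂ) * ((∑ d : DihedralGroup n, fixc n (σ, d) : ℕ) : ℂ) := by
    intro σ
    rw [Nat.cast_sum, Finset.mul_sum]
    rfl
  rw [Finset.sum_congr rfl fun σ _ => hrow σ]
  rw [perm_univ]
  rw [Finset.sum_insert (by decide), Finset.sum_insert (by decide),
      Finset.sum_insert (by decide), Finset.sum_insert (by decide),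
      Finset.sum_insert (by decide), Finset.sum_singleton]
  rw [Sd_one, Sd_s01, Sd_s12, Sd_s02, Sd_c3, Sd_c3i]
  rw [show Equiv.Perm.sign (1 : Equiv.Perm (Fin 3)) = 1 by decide,
      show Equiv.Perm.sign (Equiv.swap (0:Fin 3) 1) = -1 by decide,
      show Equiv.Perm.sign (Equiv.swap (1:Fin 3) 2) = -1 by decide,
      show Equiv.Perm.sign (Equiv.swap (0:Fin 3) 2) = -1 by decide,
      show Equiv.Perm.sign c3 = 1 by decide,
      show Equiv.Perm.sign (c3⁻¹) = 1 by decide]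
  push_cast
  ring


abbrev T3 (n : ℕ) := ZMod n × ZMod n × ZMod n

lemma mem_lambda3_iff (f : T3 n → ℂ) : f ∈ lambda3Invariants n ↔
    ((∀ t : T3 n, f (t.2.1, t.1, t.2.2) = - f t) ∧
     (∀ t : T3 n, f (t.1, t.2.2, t.2.1) = - f t) ∧
     (∀ k : ZMod n, ∀ t : T3 n, f (t.1 + k, t.2.1 + k, t.2.2 + k) = f t) ∧
     (∀ t : T3 n, f (-t.1, -t.2.1, -t.2.2) = f t)) := by
  simp only [lambda3Invariants, Submodule.mem_inf, Submodule.mem_iInf, LinearMap.mem_ker,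
    LinearMap.add_apply, LinearMap.sub_apply, LinearMap.funLeft_apply, LinearMap.id_apply,
    funext_iff, Pi.add_apply, Pi.sub_apply, Pi.zero_apply, Function.comp_apply,
    add_eq_zero_iff_eq_neg, sub_eq_zero]
  constructor
  · rintro ⟨⟨⟨h1, h2⟩, h3⟩, h4⟩
    exact ⟨h1, h2, fun k t => h3 k t, h4⟩
  · rintro ⟨h1, h2, h3, h4⟩
    exact ⟨⟨⟨h1, h2⟩, fun k t => h3 k t⟩, h4⟩

noncomputable def Phi : ((X n → ℂ)) ≃ₗ[ℂ] ((T3 n) → ℂ) :=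
  LinearEquiv.funCongrLeft ℂ ℂ (tripleEquiv n)

lemma Phi_symm_apply (f : T3 n → ℂ) (v : X n) :
    (Phi n).symm f v = f (v 0, v 1, v 2) := rfl

lemma usp_cond_iff (g : X n → ℂ) (γ : G n) :
    chi n γ • rho n γ g = g ↔ ∀ v : X n, chi n γ * g (act n γ⁻¹ v) = g v := by
  rw [funext_iff]
  constructor
  · intro h v; have := h v; simpa [rho_apply] using this
  · intro h v; simpa [rho_apply] using h v


lemma mem_lambda3_iff_usp (f : T3 n → ℂ) :
    f ∈ lambda3Invariants n ↔ (Phi n).symm f ∈ Usp n := by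
  set g : X n → ℂ := (Phi n).symm f with hg
  have hgv : ∀ v : X n, g v = f (v 0, v 1, v 2) := fun v => rfl
  have act1 : ∀ v : X n, act n ((Equiv.swap 0 1, 1) : G n)⁻¹ v
      = fun i => v (Equiv.swap 0 1 i) := by
    intro v; funext i
    simp [act, dact_one, Prod.inv_mk, inv_one, inv_inv]
  have act2 : ∀ v : X n, act n ((Equiv.swap 1 2, 1) : G n)⁻¹ v
      = fun i => v (Equiv.swap 1 2 i) := by
    intro v; funext i
    simp [act, dact_one, Prod.inv_mk, inv_one, inv_inv]
  have act3 : ∀ (k : ZMod n) (v : X n),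
      act n ((1, DihedralGroup.r k) : G n)⁻¹ v = fun i => v i + k := by
    intro k v; funext i
    show dact n (DihedralGroup.r k)⁻¹ (v _) = v i + k
    rw [show (DihedralGroup.r k)⁻¹ = DihedralGroup.r (-k) from rfl]
    show v ((1 : Equiv.Perm (Fin 3))⁻¹ i) - (-k) = v i + k
    simp [sub_neg_eq_add]
  have act4 : ∀ v : X n, act n ((1, DihedralGroup.sr 0) : G n)⁻¹ v = fun i => - v i := by
    intro v; funext i
    show dact n (DihedralGroup.sr 0)⁻¹ (v _) = - v i
    rw [show (DihedralGroup.sr 0)⁻¹ = DihedralGroup.sr 0 from rfl]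
    show (0 : ZMod n) - v ((1 : Equiv.Perm (Fin 3))⁻¹ i) = - v i
    simp
  have chi1 : chi n ((Equiv.swap 0 1, 1) : G n) = -1 := by
    simp only [chi]
    rw [show Equiv.Perm.sign (Equiv.swap (0:Fin 3) 1) = -1 by decide]
    simp
  have chi2 : chi n ((Equiv.swap 1 2, 1) : G n) = -1 := by
    simp only [chi]
    rw [show Equiv.Perm.sign (Equiv.swap (1:Fin 3) 2) = -1 by decide]
    simp
  have chi3 : ∀ k : ZMod n, chi n ((1, DihedralGroup.r k) : G n) = 1 := by
    intro k; simp [chi]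
  have chi4 : chi n ((1, DihedralGroup.sr 0) : G n) = 1 := by
    simp [chi]
  have e010 : Equiv.swap (0:Fin 3) 1 0 = 1 := by decide
  have e011 : Equiv.swap (0:Fin 3) 1 1 = 0 := by decide
  have e012 : Equiv.swap (0:Fin 3) 1 2 = 2 := by decide
  have e120 : Equiv.swap (1:Fin 3) 2 0 = 0 := by decide
  have e121 : Equiv.swap (1:Fin 3) 2 1 = 2 := by decide
  have e122 : Equiv.swap (1:Fin 3) 2 2 = 1 := by decide
  constructor
  · intro hf
    rw [mem_lambda3_iff] at hf
    obtain ⟨h1, h2, h3, h4⟩ := hf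
    let H : Subgroup (G n) :=
      { carrier := {γ | chi n γ • rho n γ g = g}
        one_mem' := by
          simp only [Set.mem_setOf_eq, chi_one, rho_one, one_smul]
          rfl
        mul_mem' := by
          intro γ δ hγ hδ
          simp only [Set.mem_setOf_eq] at hγ hδ ⊢
          rw [chi_mul, rho_mul]
          calc (chi n γ * chi n δ) • (rho n γ * rho n δ) g
              = chi n γ • rho n γ (chi n δ • rho n δ g) := by
                rw [Module.End.mul_apply, map_smul, smul_smul]
            _ = g := by rw [hδ, hγ]
        inv_mem' := by
          intro γ hγ
          simp only [Set.mem_setOf_eq] at hγ ⊢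
          conv_lhs => rw [← hγ]
          rw [map_smul, smul_smul, ← Module.End.mul_apply, ← rho_mul, inv_mul_cancel,
            ← chi_mul, inv_mul_cancel, chi_one, rho_one, one_smul]
          rfl }
    have mem1 : ((Equiv.swap 0 1, 1) : G n) ∈ H := by
      show chi n _ • rho n _ g = g
      rw [usp_cond_iff]
      intro v
      rw [chi1, act1 v, hgv, hgv]
      simp only [e010, e011, e012]
      have hh := h1 (v 0, v 1, v 2)
      dsimp only at hh
      rw [hh]
      ring
    have mem2 : ((Equiv.swap 1 2, 1) : G n) ∈ H := by
      show chi n _ • rho n _ g = g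
      rw [usp_cond_iff]
      intro v
      rw [chi2, act2 v, hgv, hgv]
      simp only [e120, e121, e122]
      have hh := h2 (v 0, v 1, v 2)
      dsimp only at hh
      rw [hh]
      ring
    have mem3 : ∀ k : ZMod n, ((1, DihedralGroup.r k) : G n) ∈ H := by
      intro k
      show chi n _ • rho n _ g = g
      rw [usp_cond_iff]
      intro v
      rw [chi3, act3 k v, hgv, hgv, one_mul]
      have hh := h3 k (v 0, v 1, v 2)
      dsimp only at hh
      exact hh
    have mem4 : ((1, DihedralGroup.sr 0) : G n) ∈ H := by
      show chi n _ • rho n _ g = g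
      rw [usp_cond_iff]
      intro v
      rw [chi4, act4 v, hgv, hgv, one_mul]
      have hh := h4 (v 0, v 1, v 2)
      dsimp only at hh
      exact hh
    intro γ
    show γ ∈ {γ : G n | chi n γ • rho n γ g = g}
    obtain ⟨σ, d⟩ := γ
    have hσ : ((σ, 1) : G n) ∈ H := by
      have hperm : σ = 1 ∨ σ = Equiv.swap 0 1 ∨ σ = Equiv.swap 1 2 ∨
          σ = Equiv.swap 0 1 * Equiv.swap 1 2 * Equiv.swap 0 1 ∨
          σ = Equiv.swap 0 1 * Equiv.swap 1 2 ∨ σ = Equiv.swap 1 2 * Equiv.swap 0 1 := by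
        revert σ; decide
      have hmul : ∀ a b : Equiv.Perm (Fin 3), ((a * b, 1) : G n) = (a, 1) * (b, 1) := by
        intro a b; rw [Prod.mk_mul_mk, mul_one]
      rcases hperm with rfl | rfl | rfl | rfl | rfl | rfl
      · exact H.one_mem
      · exact mem1
      · exact mem2
      · rw [hmul, hmul]; exact H.mul_mem (H.mul_mem mem1 mem2) mem1
      · rw [hmul]; exact H.mul_mem mem1 mem2
      · rw [hmul]; exact H.mul_mem mem2 mem1
    have hd : (((1 : Equiv.Perm (Fin 3)), d) : G n) ∈ H := by
      cases d with
      | r i => exact mem3 i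
      | sr i =>
          have heq : (((1 : Equiv.Perm (Fin 3)), DihedralGroup.sr i) : G n)
              = ((1, DihedralGroup.sr 0) : G n) * ((1, DihedralGroup.r i) : G n) := by
            rw [Prod.mk_mul_mk, mul_one, DihedralGroup.sr_mul_r, zero_add]
          rw [heq]
          exact H.mul_mem mem4 (mem3 i)
    have heq2 : ((σ, d) : G n) = ((σ, 1) : G n) * ((1, d) : G n) := by
      rw [Prod.mk_mul_mk, mul_one, one_mul]
    have := H.mul_mem hσ hd
    rw [← heq2] at this
    exact this
  · intro hg2
    rw [mem_lambda3_iff]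
    have inst1 := (usp_cond_iff n g _).mp (hg2 (Equiv.swap 0 1, 1))
    have inst2 := (usp_cond_iff n g _).mp (hg2 (Equiv.swap 1 2, 1))
    have inst3 := fun k : ZMod n => (usp_cond_iff n g _).mp (hg2 (1, DihedralGroup.r k))
    have inst4 := (usp_cond_iff n g _).mp (hg2 (1, DihedralGroup.sr 0))
    refine ⟨?_, ?_, ?_, ?_⟩
    · rintro ⟨x, y, z⟩
      dsimp only
      have hh := inst1 (tripleEquiv n (x, y, z))
      rw [chi1, act1, hgv, hgv] at hh
      simp only [e010, e011, e012] at hh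
      have hv0 : tripleEquiv n ((x, y, z) : T3 n) 0 = x := rfl
      have hv1 : tripleEquiv n ((x, y, z) : T3 n) 1 = y := rfl
      have hv2 : tripleEquiv n ((x, y, z) : T3 n) 2 = z := rfl
      rw [hv0, hv1, hv2] at hh
      linear_combination -hh
    · rintro ⟨x, y, z⟩
      dsimp only
      have hh := inst2 (tripleEquiv n (x, y, z))
      rw [chi2, act2, hgv, hgv] at hh
      simp only [e120, e121, e122] at hh
      have hv0 : tripleEquiv n ((x, y, z) : T3 n) 0 = x := rfl
      have hv1 : tripleEquiv n ((x, y, z) : T3 n) 1 = y := rfl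
      have hv2 : tripleEquiv n ((x, y, z) : T3 n) 2 = z := rfl
      rw [hv0, hv1, hv2] at hh
      linear_combination -hh
    · rintro k ⟨x, y, z⟩
      dsimp only
      have hh := inst3 k (tripleEquiv n (x, y, z))
      rw [chi3, act3, hgv, hgv, one_mul] at hh
      have hv0 : tripleEquiv n ((x, y, z) : T3 n) 0 = x := rfl
      have hv1 : tripleEquiv n ((x, y, z) : T3 n) 1 = y := rfl
      have hv2 : tripleEquiv n ((x, y, z) : T3 n) 2 = z := rfl
      rw [hv0, hv1, hv2] at hh
      exact hh
    · rintro ⟨x, y, z⟩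
      dsimp only
      have hh := inst4 (tripleEquiv n (x, y, z))
      rw [chi4, act4, hgv, hgv, one_mul] at hh
      have hv0 : tripleEquiv n ((x, y, z) : T3 n) 0 = x := rfl
      have hv1 : tripleEquiv n ((x, y, z) : T3 n) 1 = y := rfl
      have hv2 : tripleEquiv n ((x, y, z) : T3 n) 2 = z := rfl
      rw [hv0, hv1, hv2] at hh
      exact hh

lemma lambda3_eq_map :
    lambda3Invariants n = Submodule.map ((Phi n : (X n → ℂ) →ₗ[ℂ] (T3 n → ℂ))) (Usp n) := by
  ext f
  rw [Submodule.mem_map_equiv]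
  exact mem_lambda3_iff_usp n f

end Counting
end L3Aux


/-- For `π = ℤ/n`, the dimension of the `(π × π) ⋊ ℤ₂`-invariant part of `Λ³ ℂ[π]`
equals `p₃(n − 6)` (which is zero if `n < 6`). -/
theorem finrank_lambda3_invariants (n : ℕ) (hn : 0 < n) :
    Module.finrank ℂ (lambda3Invariants n) = p3 ((n : ℤ) - 6) := by
  haveI : NeZero n := ⟨hn.ne'⟩
  have h1 : Module.finrank ℂ (lambda3Invariants n) = Module.finrank ℂ (L3Aux.Usp n) := by
    rw [L3Aux.lambda3_eq_map n]
    exact LinearEquiv.finrank_map_eq _ _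
  have h2 := L3Aux.finrank_Usp_eq_trace n
  rw [L3Aux.trace_Pav n] at h2
  have hne : ((12 * n : ℕ) : ℂ) ≠ 0 := L3Aux.hc12 n
  have hS : (∑ γ : L3Aux.G n, L3Aux.chi n γ * (L3Aux.fixc n γ : ℂ))
      = ((12 * n : ℕ) : ℂ) * ((Module.finrank ℂ (L3Aux.Usp n) : ℕ) : ℂ) := by
    rw [h2, ← mul_assoc, mul_inv_cancel₀ hne, one_mul]
  have hsum := L3Aux.sum_G n
  rw [hS] at hsum
  have hnat : 12 * n * Module.finrank ℂ (L3Aux.Usp n) + 6 * n ^ 2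
      = n ^ 3 + n * L3Aux.cnt2 n 0 ^ 2 + 2 * (L3Aux.cnt3 n * n + n) := by
    exact_mod_cast hsum
  have hp3 := P3Aux.p3_formula n hn
  rw [← L3Aux.card_two_torsion n, ← L3Aux.card_three_torsion n] at hp3
  have hnat2 : 12 * n * p3 ((n : ℤ) - 6) + 6 * n ^ 2
      = n ^ 3 + n * L3Aux.cnt2 n 0 ^ 2 + 2 * (L3Aux.cnt3 n * n + n) := by
    have hr : 12 * n * p3 ((n : ℤ) - 6) + 6 * n ^ 2
        = n * (12 * p3 ((n : ℤ) - 6) + 6 * n) := by ring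
    rw [hr, hp3]
    ring
  have hfin : 12 * n * Module.finrank ℂ (L3Aux.Usp n) = 12 * n * p3 ((n : ℤ) - 6) := by omega
  rw [h1]
  exact Nat.eq_of_mul_eq_mul_left (by omega) hfin
end
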